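/- arXiv:2505.07739 — 10 statements merged into one kernel-verified Lean document; each statement's English description precedes it below -/
import Mathlib

section
/- Let T = k[x_1, x_2, x_3, …]/J where k is a field and J is the ideal generated by x_i^(i+1) for all i ≥ 1 and x_i x_j for all i ≠ j, and let I be the ideal of T generated by the images of all x_i. Then I and T/I are strongly I-torsion T-modules, but T is not a strongly I-torsion T-module; hence the class of strongly I-torsion modules is not closed under extensions. -/
open MvPolynomial

set_option synthInstance.maxHeartbeats 1000000
set_option maxHeartbeats 1000000

/-- The ideal of relations `J`, generated by `x_i^(i+1)` for all `i ≥ 1` and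
`x_i x_j` for all `i ≠ j`, in the polynomial ring `k[x_1, x_2, x_3, …]`. -/
noncomputable def hrbekJ (k : Type) [Field k] : Ideal (MvPolynomial ℕ+ k) :=
  Ideal.span ({p | ∃ i : ℕ+, p = X i ^ ((i : ℕ) + 1)} ∪
    {p | ∃ i j : ℕ+, i ≠ j ∧ p = X i * X j})

/-- The quotient ring `T = k[x_1, x_2, x_3, …]/J`. -/
noncomputable abbrev hrbekT (k : Type) [Field k] : Type :=
  MvPolynomial ℕ+ k ⧸ hrbekJ k

/-- The ideal `I ⊆ T` generated by the images of all the variables `x_i`. -/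
noncomputable def hrbekI (k : Type) [Field k] : Ideal (hrbekT k) :=
  Ideal.span (Set.range fun i : ℕ+ => Ideal.Quotient.mk (hrbekJ k) (X i))

noncomputable def xb (k : Type) [Field k] (i : ℕ+) : hrbekT k :=
  Ideal.Quotient.mk (hrbekJ k) (X i)

lemma hrbekI_eq (k : Type) [Field k] : hrbekI k = Ideal.span (Set.range (xb k)) := rfl

lemma xb_mem (k : Type) [Field k] (i : ℕ+) : xb k i ∈ hrbekI k :=
  Ideal.subset_span ⟨i, rfl⟩

lemma xb_pow (k : Type) [Field k] (i : ℕ+) : xb k i ^ ((i : ℕ) + 1) = 0 := by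
  rw [xb, ← map_pow, Ideal.Quotient.eq_zero_iff_mem]
  exact Ideal.subset_span (Or.inl ⟨i, rfl⟩)

lemma xb_mul (k : Type) [Field k] {i j : ℕ+} (h : i ≠ j) : xb k i * xb k j = 0 := by
  simp only [xb]
  rw [← map_mul, Ideal.Quotient.eq_zero_iff_mem]
  exact Ideal.subset_span (Or.inr ⟨i, j, h, rfl⟩)

lemma mul_span_le (k : Type) [Field k] (i : ℕ+) (c : ℕ) :
    hrbekI k * Ideal.span {xb k i ^ (c + 1)} ≤ Ideal.span {xb k i ^ (c + 2)} := by
  rw [hrbekI_eq, Ideal.span_mul_span']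
  rw [Ideal.span_le]
  rintro _ ⟨u, ⟨j, rfl⟩, v, rfl, rfl⟩
  dsimp only
  rcases eq_or_ne j i with rfl | hji
  · have : xb k j * xb k j ^ (c + 1) = xb k j ^ (c + 2) := by ring
    rw [this]
    exact Ideal.subset_span rfl
  · have : xb k j * xb k i ^ (c + 1) = (xb k j * xb k i) * xb k i ^ c := by ring
    rw [this, xb_mul k hji, zero_mul]
    exact Ideal.zero_mem _

lemma pow_mul_span_le (k : Type) [Field k] (i : ℕ+) (n : ℕ) :
    (hrbekI k) ^ n * Ideal.span {xb k i} ≤ Ideal.span {xb k i ^ (n + 1)} := by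
  induction n with
  | zero => simp
  | succ n ih =>
      calc (hrbekI k) ^ (n + 1) * Ideal.span {xb k i}
          = hrbekI k * ((hrbekI k) ^ n * Ideal.span {xb k i}) := by
            ring
        _ ≤ hrbekI k * Ideal.span {xb k i ^ (n + 1)} := Ideal.mul_mono_right ih
        _ ≤ Ideal.span {xb k i ^ (n + 2)} := mul_span_le k i n

lemma ann_xb (k : Type) [Field k] (i : ℕ+) {x : hrbekT k}
    (hx : x ∈ (hrbekI k) ^ ((i : ℕ) + 1)) : x * xb k i = 0 := by
  have h1 : x * xb k i ∈ (hrbekI k) ^ ((i : ℕ) + 1) * Ideal.span {xb k i} :=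
    Ideal.mul_mem_mul hx (Ideal.subset_span rfl)
  have h2 := pow_mul_span_le k i ((i : ℕ) + 1) h1
  have h3 : xb k i ^ ((i : ℕ) + 1 + 1) = 0 := by
    rw [pow_succ, xb_pow, zero_mul]
  rw [h3, Ideal.span_singleton_eq_bot.mpr rfl, Ideal.mem_bot] at h2
  exact h2

lemma not_mem_hrbekJ (k : Type) [Field k] (n : ℕ) (i : ℕ+) (hi : (i : ℕ) = n + 1) :
    X i ^ (n + 1) ∉ hrbekJ k := by
  classical
  set B := Polynomial k ⧸ Ideal.span {(Polynomial.X : Polynomial k) ^ (n + 2)} with hB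
  set y : B := Ideal.Quotient.mk _ Polynomial.X with hy
  set ψ : MvPolynomial ℕ+ k →+* B :=
    eval₂Hom (algebraMap k B) (fun j : ℕ+ => if j = i then y else 0) with hψ
  have hyz : y ^ (n + 2) = 0 := by
    rw [hy, ← map_pow, Ideal.Quotient.eq_zero_iff_mem]
    exact Ideal.subset_span rfl
  have hker : hrbekJ k ≤ RingHom.ker ψ := by
    rw [hrbekJ, Ideal.span_le]
    rintro p (⟨a, rfl⟩ | ⟨a, b, hab, rfl⟩) <;>
      simp only [SetLike.mem_coe, RingHom.mem_ker, hψ, map_pow, map_mul, eval₂Hom_X']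
    · rcases eq_or_ne a i with rfl | ha
      · rw [if_pos rfl, hi, hyz]
      · rw [if_neg ha, zero_pow (Nat.succ_ne_zero _)]
    · rcases eq_or_ne a i with rfl | ha
      · rw [if_neg (Ne.symm hab), mul_zero]
      · rw [if_neg ha, zero_mul]
  intro hmem
  have h0 : ψ (X i ^ (n + 1)) = 0 := hker hmem
  rw [map_pow, eval₂Hom_X', if_pos rfl, hy, ← map_pow, Ideal.Quotient.eq_zero_iff_mem,
    Ideal.mem_span_singleton] at h0
  have := (Polynomial.X_pow_dvd_iff.mp h0) (n + 1) (Nat.lt_succ_self _)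
  simp [Polynomial.coeff_X_pow] at this

/-- Hrbek's example: for `T = k[x_1, x_2, …]/(x_i^(i+1), x_i x_j (i ≠ j))` and `I` the
ideal generated by the images of the `x_i`, the `T`-modules `I` and `T/I` are strongly
`I`-torsion, but `T` itself is not strongly `I`-torsion; hence the class of strongly
`I`-torsion modules is not closed under extensions. -/
theorem stmt5 (k : Type) [Field k] :
    (∀ m ∈ hrbekI k, ∃ n : ℕ, ∀ x ∈ (hrbekI k) ^ (n + 1), x * m = 0) ∧
    (∀ m : hrbekT k, ∃ n : ℕ, ∀ x ∈ (hrbekI k) ^ (n + 1), x * m ∈ hrbekI k) ∧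
    ¬ (∀ m : hrbekT k, ∃ n : ℕ, ∀ x ∈ (hrbekI k) ^ (n + 1), x * m = 0) := by
  refine ⟨?_, ?_, ?_⟩
  · intro m hm
    rw [hrbekI_eq] at hm
    induction hm using Submodule.span_induction with
    | mem a ha =>
        obtain ⟨i, rfl⟩ := ha
        exact ⟨(i : ℕ), fun x hx => ann_xb k i hx⟩
    | zero => exact ⟨0, fun x _ => mul_zero x⟩
    | add a b _ _ iha ihb =>
        obtain ⟨na, hna⟩ := iha
        obtain ⟨nb, hnb⟩ := ihb
        refine ⟨max na nb, fun x hx => ?_⟩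
        have hxa : x ∈ (hrbekI k) ^ (na + 1) :=
          Ideal.pow_le_pow_right (by omega) hx
        have hxb : x ∈ (hrbekI k) ^ (nb + 1) :=
          Ideal.pow_le_pow_right (by omega) hx
        rw [mul_add, hna x hxa, hnb x hxb, add_zero]
    | smul r a _ ih =>
        obtain ⟨na, hna⟩ := ih
        refine ⟨na, fun x hx => ?_⟩
        rw [smul_eq_mul, mul_left_comm, hna x hx, mul_zero]
  · intro m
    refine ⟨0, fun x hx => ?_⟩
    rw [zero_add, Submodule.pow_one] at hx
    exact Ideal.mul_mem_right m _ hx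
  · intro h
    obtain ⟨n, hn⟩ := h 1
    set i : ℕ+ := ⟨n + 1, Nat.succ_pos n⟩ with hi
    have hmem : xb k i ^ (n + 1) ∈ (hrbekI k) ^ (n + 1) :=
      Ideal.pow_mem_pow (xb_mem k i) _
    have h0 := hn _ hmem
    rw [mul_one] at h0
    rw [xb, ← map_pow, Ideal.Quotient.eq_zero_iff_mem] at h0
    exact not_mem_hrbekJ k n i rfl h0
end

section
/- Let T be a commutative ring, I ⊂ T an ideal, and M a T-module with the ordinal-indexed filtration F^(I)_0 M = {m : Im = 0}, F^(I)_α M = {m : Im ⊆ ⋃_{β<α} F^(I)_β M}. Then M = ⋃_β F^(I)_β M (union over all ordinals) if and only if for every m ∈ M and every sequence s_0, s_1, s_2, … of elements of I there exists n ≥ 0 such that s_n s_{n-1} ⋯ s_1 s_0 m = 0. -/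
/-- The ordinal-indexed increasing filtration `F^(I)` on a `T`-module `M`:
`F^(I)_0 M = {m : I m = 0}` and `F^(I)_α M = {m : I m ⊆ ⋃_{β < α} F^(I)_β M}`. -/
noncomputable def Ffilt (T : Type) [CommRing T] (I : Ideal T) (M : Type) [AddCommGroup M]
    [Module T M] : Ordinal.{0} → Set M :=
  WellFounded.fix Ordinal.lt_wf (C := fun _ => Set M) fun α F =>
    { m | ∀ s ∈ I, s • m = 0 ∨ ∃ β, ∃ h : β < α, s • m ∈ F β h }

lemma Ffilt_eq (T : Type) [CommRing T] (I : Ideal T) (M : Type) [AddCommGroup M]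
    [Module T M] (α : Ordinal.{0}) :
    Ffilt T I M α =
      { m | ∀ s ∈ I, s • m = 0 ∨ ∃ β, ∃ _ : β < α, s • m ∈ Ffilt T I M β } :=
  WellFounded.fix_eq _ _ _

lemma Ffilt_mem_iff (T : Type) [CommRing T] (I : Ideal T) (M : Type) [AddCommGroup M]
    [Module T M] (α : Ordinal.{0}) (m : M) :
    m ∈ Ffilt T I M α ↔ ∀ s ∈ I, s • m = 0 ∨ ∃ β, β < α ∧ s • m ∈ Ffilt T I M β := by
  rw [Ffilt_eq]
  simp only [Set.mem_setOf_eq, exists_prop]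

lemma Ffilt_forward (T : Type) [CommRing T] (I : Ideal T) (M : Type) [AddCommGroup M]
    [Module T M] : ∀ α : Ordinal.{0}, ∀ m ∈ Ffilt T I M α, ∀ s : ℕ → T, (∀ n, s n ∈ I) →
      ∃ n : ℕ, (∏ i ∈ Finset.range (n + 1), s i) • m = 0 := by
  intro α
  induction α using Ordinal.induction with
  | h α IH =>
    intro m hm s hs
    rcases (Ffilt_mem_iff T I M α m).mp hm (s 0) (hs 0) with h0 | ⟨β, hβ, hmem⟩
    · exact ⟨0, by simpa using h0⟩
    · obtain ⟨n, hn⟩ := IH β hβ (s 0 • m) hmem (fun k => s (k + 1)) (fun k => hs (k + 1))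
      refine ⟨n + 1, ?_⟩
      rw [Finset.prod_range_succ' (fun i => s i) (n + 1), mul_smul]
      simpa [smul_smul] using hn

/-- A `T`-module `M` is quite `I`-torsion (i.e. `M = ⋃_β F^(I)_β M`, union over all
ordinals) if and only if for every `m ∈ M` and every sequence `s_0, s_1, s_2, …` of
elements of `I` there exists `n ≥ 0` with `s_n ⋯ s_1 s_0 m = 0`. -/
theorem stmt6 (T : Type) [CommRing T] (I : Ideal T)
    (M : Type) [AddCommGroup M] [Module T M] :
    (∀ m : M, ∃ β : Ordinal.{0}, m ∈ Ffilt T I M β) ↔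
      (∀ (m : M) (s : ℕ → T), (∀ n : ℕ, s n ∈ I) →
        ∃ n : ℕ, (∏ i ∈ Finset.range (n + 1), s i) • m = 0) := by
  classical
  constructor
  · intro h m s hs
    obtain ⟨β, hβ⟩ := h m
    exact Ffilt_forward T I M β m hβ s hs
  · intro H m
    by_contra hm
    push_neg at hm
    set Bad : M → Prop := fun x => ∀ β, x ∉ Ffilt T I M β with hBad
    have step : ∀ x : M, Bad x → ∃ s ∈ I, Bad (s • x) := by
      intro x hx
      by_contra hc
      push_neg at hc
      -- for every s ∈ I there is β with s • x ∈ Ffilt β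
      have hc' : ∀ s : I, ∃ β, (s : T) • x ∈ Ffilt T I M β := by
        intro s
        have h1 : ¬ Bad ((s : T) • x) := hc s s.2
        rw [hBad] at h1
        exact (not_forall.mp h1).imp fun β hβ => not_not.mp hβ
      choose f hf using hc'
      have hx' : x ∈ Ffilt T I M (Order.succ (iSup f)) := by
        rw [Ffilt_mem_iff]
        intro s hsI
        right
        refine ⟨f ⟨s, hsI⟩, ?_, hf ⟨s, hsI⟩⟩
        exact lt_of_le_of_lt (le_ciSup (Ordinal.bddAbove_range f) ⟨s, hsI⟩)
          (Order.lt_succ _)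
      exact hx _ hx'
    obtain ⟨F, hF⟩ : ∃ F : {x : M // Bad x} → T,
        ∀ x, F x ∈ I ∧ Bad (F x • x.1) := by
      choose F h1 h2 using fun x : {x : M // Bad x} => step x.1 x.2
      exact ⟨F, fun x => ⟨h1 x, h2 x⟩⟩
    let g : ℕ → {x : M // Bad x} := fun n =>
      Nat.rec ⟨m, hm⟩ (fun _ p => ⟨F p • p.1, (hF p).2⟩) n
    let s : ℕ → T := fun n => F (g n)
    have hsI : ∀ n, s n ∈ I := fun n => (hF (g n)).1
    have hgsucc : ∀ n, ((g (n + 1)).1) = s n • (g n).1 := fun n => rfl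
    have hprod : ∀ n, (∏ i ∈ Finset.range (n + 1), s i) • m = (g (n + 1)).1 := by
      intro n
      induction n with
      | zero => rw [Finset.prod_range_one]; rfl
      | succ k ih =>
        rw [Finset.prod_range_succ, mul_comm, mul_smul, ih]
    obtain ⟨n, hn⟩ := H m s hsI
    have h0 : (g (n + 1)).1 = 0 := by rw [← hprod n]; exact hn
    have : (0 : M) ∈ Ffilt T I M 0 := by
      rw [Ffilt_mem_iff]
      intro s hs
      left
      exact smul_zero s
    exact (g (n + 1)).2 0 (h0 ▸ this)
end

section
/- Let T be a commutative ring, I ⊂ T an ideal, and G ⊆ I a generating set of I. If for every m ∈ M and every sequence s_0, s_1, s_2, … of elements of G there exists n ≥ 0 with s_n ⋯ s_1 s_0 m = 0, then M is quite I-torsion (the T-nilpotence condition may be checked on generators). -/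
section aux

variable (T : Type) [CommRing T] (I : Ideal T) (M : Type) [AddCommGroup M] [Module T M]

lemma mem_Ffilt (α : Ordinal.{0}) (m : M) :
    m ∈ Ffilt T I M α ↔ ∀ s ∈ I, s • m = 0 ∨ ∃ β < α, s • m ∈ Ffilt T I M β := by
  have : Ffilt T I M α =
      { m | ∀ s ∈ I, s • m = 0 ∨ ∃ β, ∃ _ : β < α, s • m ∈ Ffilt T I M β } := by
    conv_lhs => rw [Ffilt]
    rw [WellFounded.fix_eq]
    rfl
  rw [this]
  simp only [Set.mem_setOf_eq, exists_prop]

lemma Ffilt_mono {α β : Ordinal.{0}} (h : α ≤ β) : Ffilt T I M α ⊆ Ffilt T I M β := by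
  intro m hm
  rw [mem_Ffilt] at hm ⊢
  exact fun s hs => (hm s hs).imp id fun ⟨γ, hγ, hx⟩ => ⟨γ, hγ.trans_le h, hx⟩

lemma smul_mem_Ffilt (α : Ordinal.{0}) (t : T) {m : M} (hm : m ∈ Ffilt T I M α) :
    t • m ∈ Ffilt T I M α := by
  induction α using Ordinal.induction generalizing m with
  | h α ih =>
    rw [mem_Ffilt] at hm ⊢
    intro s hs
    have key : s • t • m = t • s • m := by
      rw [smul_smul, smul_smul, mul_comm]
    rcases hm s hs with h0 | ⟨γ, hγ, hx⟩
    · left; rw [key, h0, smul_zero]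
    · right; exact ⟨γ, hγ, key ▸ ih γ hγ hx⟩

lemma add_mem_Ffilt (α : Ordinal.{0}) {m m' : M} (hm : m ∈ Ffilt T I M α)
    (hm' : m' ∈ Ffilt T I M α) : m + m' ∈ Ffilt T I M α := by
  induction α using Ordinal.induction generalizing m m' with
  | h α ih =>
    rw [mem_Ffilt] at hm hm' ⊢
    intro s hs
    rw [smul_add]
    rcases hm s hs with h0 | ⟨γ, hγ, hx⟩ <;> rcases hm' s hs with h0' | ⟨γ', hγ', hx'⟩
    · left; rw [h0, h0', add_zero]
    · right; exact ⟨γ', hγ', by rw [h0, zero_add]; exact hx'⟩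
    · right; exact ⟨γ, hγ, by rw [h0', add_zero]; exact hx⟩
    · right
      refine ⟨max γ γ', max_lt hγ hγ', ih _ (max_lt hγ hγ') ?_ ?_⟩
      · exact Ffilt_mono T I M (le_max_left _ _) hx
      · exact Ffilt_mono T I M (le_max_right _ _) hx'

lemma zero_mem_Ffilt : (0 : M) ∈ Ffilt T I M 0 := by
  rw [mem_Ffilt]
  exact fun s _ => Or.inl (smul_zero s)

end aux

/-- The T-nilpotence condition for quite torsion may be checked on any set of generators
`G` of the ideal `I`: if for every `m ∈ M` and every sequence `s_0, s_1, …` of elements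
of `G` some product `s_n ⋯ s_1 s_0` annihilates `m`, then `M` is quite `I`-torsion. -/
theorem stmt7 (T : Type) [CommRing T] (G : Set T) (I : Ideal T) (hGI : I = Ideal.span G)
    (M : Type) [AddCommGroup M] [Module T M]
    (h : ∀ (m : M) (s : ℕ → T), (∀ n : ℕ, s n ∈ G) →
      ∃ n : ℕ, (∏ i ∈ Finset.range (n + 1), s i) • m = 0) :
    ∀ m : M, ∃ β : Ordinal.{0}, m ∈ Ffilt T I M β := by
  classical
  -- the set of quite torsion elements, as a submodule
  set Q : Submodule T M :=
    { carrier := { m : M | ∃ β : Ordinal.{0}, m ∈ Ffilt T I M β }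
      add_mem' := by
        rintro a b ⟨α, ha⟩ ⟨β, hb⟩
        exact ⟨max α β, add_mem_Ffilt T I M _ (Ffilt_mono T I M (le_max_left _ _) ha)
          (Ffilt_mono T I M (le_max_right _ _) hb)⟩
      zero_mem' := ⟨0, zero_mem_Ffilt T I M⟩
      smul_mem' := by
        rintro t a ⟨α, ha⟩
        exact ⟨α, smul_mem_Ffilt T I M α t ha⟩ } with hQ
  -- closure step: if g • m ∈ Q for all g ∈ G, then m ∈ Q
  have step : ∀ m : M, (∀ g ∈ G, g • m ∈ Q) → m ∈ Q := by
    intro m hg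
    have hsmul : ∀ s ∈ I, s • m ∈ Q := by
      intro s hs
      rw [hGI] at hs
      induction hs using Submodule.span_induction with
      | mem x hx => exact hg x hx
      | zero => rw [zero_smul]; exact Q.zero_mem
      | add x y _ _ hx hy => rw [add_smul]; exact Q.add_mem hx hy
      | smul t x _ hx => rw [smul_eq_mul, mul_smul]; exact Q.smul_mem t hx
    refine ⟨(⨆ s : I, Classical.choose (hsmul s s.2)) + 1,
      (mem_Ffilt T I M _ m).2 fun s hs => ?_⟩
    right
    refine ⟨Classical.choose (hsmul s hs), ?_, Classical.choose_spec (hsmul s hs)⟩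
    have hle : Classical.choose (hsmul s hs) ≤
        ⨆ s : I, Classical.choose (hsmul s s.2) :=
      le_ciSup (Ordinal.bddAbove_range _) (⟨s, hs⟩ : I)
    exact hle.trans_lt ((Ordinal.add_one_eq_succ _).symm ▸ Order.lt_succ _)
  -- main argument: by contradiction and dependent choice of generators
  intro m
  by_contra hm
  have hm' : m ∉ Q := hm
  -- for each x ∉ Q, pick a generator g with g • x ∉ Q
  have pick : ∀ x : M, x ∉ Q → ∃ g ∈ G, g • x ∉ Q := by
    intro x hx
    by_contra hcon
    push_neg at hcon
    exact hx (step x hcon)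
  choose g hgG hgQ using pick
  -- iterate
  let x : ℕ → {y : M // y ∉ Q} := fun n => Nat.rec ⟨m, hm'⟩
    (fun _ p => ⟨g p.1 p.2 • p.1, hgQ p.1 p.2⟩) n
  let s : ℕ → T := fun n => g (x n).1 (x n).2
  have hsG : ∀ n, s n ∈ G := fun n => hgG _ _
  have hx : ∀ n, (x (n + 1)).1 = (∏ i ∈ Finset.range (n + 1), s i) • m := by
    intro n
    induction n with
    | zero => simp [x, s]
    | succ k ih =>
      have hstep : (x (k + 2)).1 = s (k + 1) • (x (k + 1)).1 := rfl
      rw [hstep, ih, smul_smul, mul_comm, ← Finset.prod_range_succ]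
  obtain ⟨n, hn⟩ := h m s hsG
  have : (x (n + 1)).1 ∈ Q := by rw [hx n, hn]; exact Q.zero_mem
  exact (x (n + 1)).2 this
end

section
/- Let R be a commutative ring and A, B be R-R-bimodules that are quasi-modules over R (meaning for every element b and every r ∈ R, some power of the commutator operator θ_r(b) = rb − br annihilates b). Then the R-R-bimodule A ⊗_R B (tensored over the right action on A and left action on B) is also a quasi-module over R. -/
/- An `R`-`R`-bimodule is encoded as an abelian group `A` with a right `R`-action (the
`Module R A` instance) together with a commuting left `R`-action, given by a ring
homomorphism `ρA : R →+* Module.End R A` into `R`-linear endomorphisms.  The commutator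
operator is `θ_r(a) = ρA r a − r • a` (left action minus right action).  The bimodule is
a quasi-module if every element is annihilated by some power of every `θ_r`.
The tensor product `A ⊗_R B` is taken over the right action of `A` (its `Module R A`
instance) and the left action of `B` (its `Module R B` instance); the induced left
action on `A ⊗_R B` comes from the left action `ρA` on `A`, and the induced right
action comes from the right action `ρB` on `B`. -/

lemma stmt10_pow_mono {R M : Type*} [CommRing R] [AddCommGroup M] [Module R M]
    (g : Module.End R M) (v : M) {k l : ℕ} (h : (g ^ k) v = 0) (hkl : k ≤ l) :
    (g ^ l) v = 0 := by
  obtain ⟨d, rfl⟩ := Nat.exists_eq_add_of_le hkl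
  rw [add_comm, pow_add, Module.End.mul_apply, h, map_zero]

/-- If `A` and `B` are quasi-modules over `R`, then so is `A ⊗_R B`. -/
theorem stmt10 (R : Type) [CommRing R]
    (A B : Type) [AddCommGroup A] [AddCommGroup B] [Module R A] [Module R B]
    (ρA : R →+* Module.End R A) (ρB : R →+* Module.End R B)
    (hA : ∀ (r : R) (a : A), ∃ n : ℕ, (fun x => ρA r x - r • x)^[n + 1] a = 0)
    (hB : ∀ (r : R) (b : B), ∃ n : ℕ, (fun x => r • x - ρB r x)^[n + 1] b = 0) :
    ∀ (r : R) (x : TensorProduct R A B), ∃ n : ℕ,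
      (fun y => LinearMap.rTensor B (ρA r) y - LinearMap.lTensor A (ρB r) y)^[n + 1] x
        = 0 := by
  intro r x
  set θa : Module.End R A := ρA r - algebraMap R (Module.End R A) r with hθa
  set θb : Module.End R B := algebraMap R (Module.End R B) r - ρB r with hθb
  set S : Module.End R (TensorProduct R A B) := LinearMap.rTensor B θa with hSdef
  set T : Module.End R (TensorProduct R A B) := LinearMap.lTensor A θb with hTdef
  set f : Module.End R (TensorProduct R A B) :=
    LinearMap.rTensor B (ρA r) - LinearMap.lTensor A (ρB r) with hfdef
  have hfun : (fun y => LinearMap.rTensor B (ρA r) y - LinearMap.lTensor A (ρB r) y) = ⇑f := by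
    funext y; simp [hfdef]
  have hf : f = S + T := by
    apply TensorProduct.ext'
    intro a b
    simp only [hfdef, hSdef, hTdef, hθa, hθb, LinearMap.add_apply, LinearMap.sub_apply,
      LinearMap.rTensor_tmul, LinearMap.lTensor_tmul, LinearMap.sub_apply,
      Module.algebraMap_end_apply, TensorProduct.sub_tmul, TensorProduct.tmul_sub,
      TensorProduct.smul_tmul]
    abel
  have hST : Commute S T := by
    rw [hSdef, hTdef]
    show _ * _ = _ * _
    ext a b
    simp [Module.End.mul_apply]
  have hSpow : ∀ (i : ℕ) (a : A) (b : B),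
      (S ^ i) (a ⊗ₜ[R] b) = (θa ^ i) a ⊗ₜ[R] b := by
    intro i
    induction i with
    | zero => intro a b; simp
    | succ i ih =>
      intro a b
      have h1 : S (a ⊗ₜ[R] b) = θa a ⊗ₜ[R] b := by simp [hSdef]
      rw [pow_succ, Module.End.mul_apply, h1, ih, ← Module.End.mul_apply, ← pow_succ]
  have hTpow : ∀ (j : ℕ) (a : A) (b : B),
      (T ^ j) (a ⊗ₜ[R] b) = a ⊗ₜ[R] (θb ^ j) b := by
    intro j
    induction j with
    | zero => intro a b; simp
    | succ j ih =>
      intro a b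
      have h1 : T (a ⊗ₜ[R] b) = a ⊗ₜ[R] θb b := by simp [hTdef]
      rw [pow_succ, Module.End.mul_apply, h1, ih, ← Module.End.mul_apply, ← pow_succ]
  rw [hfun]
  -- reduce the goal to powers of f
  have key : ∃ n : ℕ, (f ^ (n + 1)) x = 0 := by
    induction x using TensorProduct.induction_on with
    | zero => exact ⟨0, map_zero _⟩
    | tmul a b =>
      obtain ⟨m, hm⟩ := hA r a
      obtain ⟨n, hn⟩ := hB r b
      have hma : (θa ^ (m + 1)) a = 0 := by
        have : (fun x => ρA r x - r • x) = ⇑θa := by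
          funext x; simp [hθa]
        rw [this, ← Module.End.pow_apply] at hm
        exact hm
      have hnb : (θb ^ (n + 1)) b = 0 := by
        have : (fun x => r • x - ρB r x) = ⇑θb := by
          funext x; simp [hθb]
        rw [this, ← Module.End.pow_apply] at hn
        exact hn
      refine ⟨m + n + 1, ?_⟩
      rw [hf, Commute.add_pow hST]
      rw [LinearMap.sum_apply]
      refine Finset.sum_eq_zero fun i hi => ?_
      rw [Module.End.mul_apply, Module.End.mul_apply]
      rcases le_or_gt i m with h | h
      · -- then m + n + 1 + 1 - i ≥ n + 1
        have hj : n + 1 ≤ m + n + 1 + 1 - i := by omega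
        have : (T ^ (m + n + 1 + 1 - i)) ((Nat.choose (m + n + 1 + 1) i : Module.End R
            (TensorProduct R A B)) (a ⊗ₜ[R] b)) = 0 := by
          have hc : ((Nat.choose (m + n + 1 + 1) i : Module.End R (TensorProduct R A B)))
              (a ⊗ₜ[R] b) = (Nat.choose (m + n + 1 + 1) i : ℕ) • (a ⊗ₜ[R] b) := by
            simp [Module.End.natCast_apply]
          rw [hc, map_nsmul]
          have : (T ^ (m + n + 1 + 1 - i)) (a ⊗ₜ[R] b) = 0 := by
            rw [hTpow]
            rw [stmt10_pow_mono θb b hnb hj]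
            simp
          rw [this, smul_zero]
        rw [this, map_zero]
      · -- i ≥ m + 1
        have hi' : m + 1 ≤ i := h
        have hc : ((Nat.choose (m + n + 1 + 1) i : Module.End R (TensorProduct R A B)))
            (a ⊗ₜ[R] b) = (Nat.choose (m + n + 1 + 1) i : ℕ) • (a ⊗ₜ[R] b) := by
          simp [Module.End.natCast_apply]
        rw [hc, map_nsmul, map_nsmul]
        have : (S ^ i) ((T ^ (m + n + 1 + 1 - i)) (a ⊗ₜ[R] b)) = 0 := by
          rw [hTpow, hSpow, stmt10_pow_mono θa a hma hi']
          simp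
        rw [this, smul_zero]
    | add x y hx hy =>
      obtain ⟨m, hm⟩ := hx
      obtain ⟨n, hn⟩ := hy
      refine ⟨max m n, ?_⟩
      rw [map_add, stmt10_pow_mono f x hm (by omega), stmt10_pow_mono f y hn (by omega),
        add_zero]
  obtain ⟨n, hn⟩ := key
  exact ⟨n, by rw [← Module.End.pow_apply]; exact hn⟩
end

section
/- Let R be a commutative ring and A, B be R-R-bimodules that are strong quasi-modules over R. Then A ⊗_R B is a strong quasi-module over R; moreover, with F_n the natural filtration (F_n C = {c : rc − cr ∈ F_{n-1}C for all r ∈ R}, F_{-1}C = 0), one has Σ_{i+j=n} im(F_i A ⊗_R F_j B) ⊆ F_n(A ⊗_R B). -/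
def Ffin (R : Type) [CommRing R] {C : Type} [AddCommGroup C] (θ : R → C → C) :
    ℕ → Set C
  | 0 => { c | ∀ r : R, θ r c = 0 }
  | n + 1 => { c | ∀ r : R, θ r c ∈ Ffin R θ n }

variable {R : Type} [CommRing R] {C : Type} [AddCommGroup C] [Module R C]
  {θ : R → C → C}

lemma ffin_zero (hθ : ∀ r, IsLinearMap R (θ r)) (n : ℕ) : (0 : C) ∈ Ffin R θ n := by
  induction n with
  | zero => exact fun r => (hθ r).map_zero
  | succ n ih =>
    intro r
    show θ r 0 ∈ Ffin R θ n
    rw [show θ r 0 = (0:C) from (hθ r).map_zero]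
    exact ih

lemma ffin_add (hθ : ∀ r, IsLinearMap R (θ r)) (n : ℕ) (x y : C)
    (hx : x ∈ Ffin R θ n) (hy : y ∈ Ffin R θ n) : x + y ∈ Ffin R θ n := by
  induction n generalizing x y with
  | zero =>
    intro r
    show θ r (x + y) = 0
    rw [(hθ r).map_add, hx r, hy r, add_zero]
  | succ n ih =>
    intro r
    show θ r (x + y) ∈ Ffin R θ n
    rw [(hθ r).map_add]
    exact ih _ _ (hx r) (hy r)

lemma ffin_smul (hθ : ∀ r, IsLinearMap R (θ r)) (n : ℕ) (s : R) (x : C)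
    (hx : x ∈ Ffin R θ n) : s • x ∈ Ffin R θ n := by
  induction n generalizing x with
  | zero =>
    intro r
    show θ r (s • x) = 0
    rw [(hθ r).map_smul, hx r, smul_zero]
  | succ n ih =>
    intro r
    show θ r (s • x) ∈ Ffin R θ n
    rw [(hθ r).map_smul]
    exact ih _ (hx r)

lemma ffin_succ (hθ : ∀ r, IsLinearMap R (θ r)) (n : ℕ) :
    Ffin R θ n ⊆ Ffin R θ (n + 1) := by
  induction n with
  | zero =>
    intro c hc r
    show θ r c ∈ Ffin R θ 0
    rw [hc r]
    exact ffin_zero hθ 0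
  | succ n ih => exact fun c hc r => ih (hc r)

lemma ffin_mono (hθ : ∀ r, IsLinearMap R (θ r)) {n m : ℕ} (h : n ≤ m) :
    Ffin R θ n ⊆ Ffin R θ m := by
  induction h with
  | refl => exact fun _ h => h
  | step _ ih => exact fun c hc => ffin_succ hθ _ (ih hc)

def ffinSubmodule (hθ : ∀ r, IsLinearMap R (θ r)) (n : ℕ) : Submodule R C where
  carrier := Ffin R θ n
  add_mem' := ffin_add hθ n _ _
  zero_mem' := ffin_zero hθ n
  smul_mem' := ffin_smul hθ n


/-- If `A` and `B` are strong quasi-modules over `R`, then so is `A ⊗_R B`; moreover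
`Σ_{i+j=n} im(F_i A ⊗_R F_j B) ⊆ F_n (A ⊗_R B)`. -/
theorem stmt11 (R : Type) [CommRing R]
    (A B : Type) [AddCommGroup A] [AddCommGroup B] [Module R A] [Module R B]
    (ρA : R →+* Module.End R A) (ρB : R →+* Module.End R B)
    (hA : ∀ a : A, ∃ n : ℕ, a ∈ Ffin R (fun r x => ρA r x - r • x) n)
    (hB : ∀ b : B, ∃ n : ℕ, b ∈ Ffin R (fun r x => r • x - ρB r x) n) :
    (∀ x : TensorProduct R A B, ∃ n : ℕ,
      x ∈ Ffin R (fun r y => LinearMap.rTensor B (ρA r) y - LinearMap.lTensor A (ρB r) y) n) ∧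
    (∀ n : ℕ,
      (Submodule.span R { x : TensorProduct R A B | ∃ i j : ℕ, i + j = n ∧
          ∃ a ∈ Ffin R (fun r x => ρA r x - r • x) i,
            ∃ b ∈ Ffin R (fun r x => r • x - ρB r x) j,
              x = a ⊗ₜ[R] b } : Set (TensorProduct R A B)) ⊆
        Ffin R (fun r y => LinearMap.rTensor B (ρA r) y - LinearMap.lTensor A (ρB r) y) n) := by
  set θA : R → A → A := fun r x => ρA r x - r • x with hθA
  set θB : R → B → B := fun r x => r • x - ρB r x with hθB
  set θT : R → TensorProduct R A B → TensorProduct R A B :=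
    fun r y => LinearMap.rTensor B (ρA r) y - LinearMap.lTensor A (ρB r) y with hθT
  have hlinA : ∀ r, IsLinearMap R (θA r) := fun r => by
    have : θA r = ⇑(ρA r - r • (1 : Module.End R A)) := rfl
    rw [this]; exact (ρA r - r • 1).isLinear
  have hlinB : ∀ r, IsLinearMap R (θB r) := fun r => by
    have : θB r = ⇑(r • (1 : Module.End R B) - ρB r) := rfl
    rw [this]; exact (r • 1 - ρB r).isLinear
  have hlinT : ∀ r, IsLinearMap R (θT r) := fun r => by
    have : θT r = ⇑(LinearMap.rTensor B (ρA r) - LinearMap.lTensor A (ρB r)) := rfl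
    rw [this]; exact (LinearMap.rTensor B (ρA r) - LinearMap.lTensor A (ρB r)).isLinear
  have comm : ∀ (r : R) (a : A) (b : B),
      θT r (a ⊗ₜ[R] b) = (θA r a) ⊗ₜ[R] b + a ⊗ₜ[R] (θB r b) := by
    intro r a b
    show LinearMap.rTensor B (ρA r) (a ⊗ₜ b) - LinearMap.lTensor A (ρB r) (a ⊗ₜ b)
      = (ρA r a - r • a) ⊗ₜ b + a ⊗ₜ (r • b - ρB r b)
    rw [LinearMap.rTensor_tmul, LinearMap.lTensor_tmul, TensorProduct.sub_tmul,
      TensorProduct.tmul_sub, TensorProduct.smul_tmul]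
    abel
  have key : ∀ n i j, i + j = n → ∀ a ∈ Ffin R θA i, ∀ b ∈ Ffin R θB j,
      a ⊗ₜ[R] b ∈ Ffin R θT n := by
    intro n
    induction n with
    | zero =>
      intro i j hij a ha b hb
      obtain ⟨rfl, rfl⟩ : i = 0 ∧ j = 0 := by omega
      intro r
      show θT r (a ⊗ₜ b) = 0
      rw [comm, ha r, hb r, TensorProduct.zero_tmul, TensorProduct.tmul_zero, add_zero]
    | succ n ih =>
      intro i j hij a ha b hb
      intro r
      show θT r (a ⊗ₜ b) ∈ Ffin R θT n
      rw [comm]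
      apply ffin_add hlinT
      · cases i with
        | zero =>
          rw [ha r, TensorProduct.zero_tmul]
          exact ffin_zero hlinT n
        | succ i' => exact ih i' j (by omega) _ (ha r) b hb
      · cases j with
        | zero =>
          rw [hb r, TensorProduct.tmul_zero]
          exact ffin_zero hlinT n
        | succ j' => exact ih i j' (by omega) a ha _ (hb r)
  constructor
  · intro x
    induction x with
    | zero => exact ⟨0, ffin_zero hlinT 0⟩
    | tmul a b =>
      obtain ⟨i, ha⟩ := hA a
      obtain ⟨j, hb⟩ := hB b
      exact ⟨i + j, key (i + j) i j rfl a ha b hb⟩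
    | add x y hx hy =>
      obtain ⟨n, hx⟩ := hx
      obtain ⟨m, hy⟩ := hy
      exact ⟨max n m, ffin_add hlinT _ _ _ (ffin_mono hlinT (le_max_left n m) hx)
        (ffin_mono hlinT (le_max_right n m) hy)⟩
  · intro n x hx
    have : x ∈ ffinSubmodule hlinT n := Submodule.span_le.mpr ?_ hx
    · exact this
    rintro y ⟨i, j, hij, a, ha, b, hb, rfl⟩
    exact key n i j hij a ha b hb
end

section
/- Let K → R be a homomorphism of commutative rings and U, V, W be R-modules. If D' : U → V is a K-linear strongly R-differential operator of order ≤ n' and D'' : V → W is one of order ≤ n'', then the composition D'' ∘ D' : U → W is a K-linear strongly R-differential operator of order ≤ n' + n''. -/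
/-- The commutator operator `θ_r(e) = r ∘ e − e ∘ r` on `K`-linear maps `U → V`
between `R`-modules. -/
def theta (K R U V : Type) [CommRing K] [CommRing R] [AddCommGroup U] [AddCommGroup V]
    [Module K U] [Module K V] [Module R U] [Module R V]
    [SMulCommClass K R U] [SMulCommClass K R V]
    (r : R) (e : U →ₗ[K] V) : U →ₗ[K] V where
  toFun u := r • e u - e (r • u)
  map_add' u₁ u₂ := by
    simp only [map_add, smul_add]
    abel
  map_smul' c u := by
    simp only [RingHom.id_apply]
    rw [← smul_comm c r u]
    simp only [map_smul]
    rw [← smul_comm c r (e u), ← smul_sub]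

section Aux

variable (K R U V W : Type) [CommRing K] [CommRing R]
  [AddCommGroup U] [AddCommGroup V] [AddCommGroup W]
  [Module K U] [Module K V] [Module K W] [Module R U] [Module R V] [Module R W]
  [SMulCommClass K R U] [SMulCommClass K R V] [SMulCommClass K R W]

lemma theta_apply (r : R) (e : U →ₗ[K] V) (u : U) :
    theta K R U V r e u = r • e u - e (r • u) := rfl

lemma theta_add (r : R) (e f : U →ₗ[K] V) :
    theta K R U V r (e + f) = theta K R U V r e + theta K R U V r f := by
  ext u
  simp only [theta_apply, LinearMap.add_apply, smul_add]
  abel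

lemma theta_zero (r : R) : theta K R U V r (0 : U →ₗ[K] V) = 0 := by
  ext u; simp [theta_apply]

lemma fold_add (rs : List R) (e f : U →ₗ[K] V) :
    rs.foldr (fun r e => theta K R U V r e) (e + f) =
      rs.foldr (fun r e => theta K R U V r e) e +
        rs.foldr (fun r e => theta K R U V r e) f := by
  induction rs with
  | nil => rfl
  | cons r rs ih => simp only [List.foldr_cons, ih, theta_add]

lemma fold_zero (rs : List R) :
    rs.foldr (fun r e => theta K R U V r e) (0 : U →ₗ[K] V) = 0 := by
  induction rs with
  | nil => rfl
  | cons r rs ih => simp only [List.foldr_cons, ih, theta_zero]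

lemma theta_comp (r : R) (D' : U →ₗ[K] V) (D'' : V →ₗ[K] W) :
    theta K R U W r (D''.comp D') =
      (theta K R V W r D'').comp D' + D''.comp (theta K R U V r D') := by
  ext u
  simp only [theta_apply, LinearMap.comp_apply, LinearMap.add_apply, map_sub]
  abel

lemma key (N : ℕ) : ∀ (n' n'' : ℕ), n' + n'' = N →
    ∀ (D' : U →ₗ[K] V) (D'' : V →ₗ[K] W),
    (∀ rs : List R, rs.length = n' + 1 →
      rs.foldr (fun r e => theta K R U V r e) D' = 0) →
    (∀ rs : List R, rs.length = n'' + 1 →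
      rs.foldr (fun r e => theta K R V W r e) D'' = 0) →
    ∀ rs : List R, rs.length = n' + n'' + 1 →
      rs.foldr (fun r e => theta K R U W r e) (D''.comp D') = 0 := by
  induction N with
  | zero =>
    rintro n' n'' hN D' D'' h' h'' rs hrs
    obtain ⟨rfl, rfl⟩ : n' = 0 ∧ n'' = 0 := by omega
    obtain ⟨r, rfl⟩ : ∃ r, rs = [r] := by
      match rs, hrs with
      | [r], _ => exact ⟨r, rfl⟩
    have h1 : theta K R U V r D' = 0 := by simpa using h' [r] rfl
    have h2 : theta K R V W r D'' = 0 := by simpa using h'' [r] rfl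
    simp only [List.foldr_cons, List.foldr_nil, theta_comp, h1, h2,
      LinearMap.zero_comp, LinearMap.comp_zero, add_zero]
  | succ N ih =>
    rintro n' n'' hN D' D'' h' h'' rs hrs
    obtain rfl | ⟨rs', r, rfl⟩ := rs.eq_nil_or_concat
    · simp at hrs
    simp only [List.concat_eq_append] at hrs ⊢
    rw [List.foldr_append, List.foldr_cons, List.foldr_nil, theta_comp, fold_add]
    have hlen : rs'.length = n' + n'' := by
      simpa using hrs
    have e1 : rs'.foldr (fun r e => theta K R U W r e)
        ((theta K R V W r D'').comp D') = 0 := by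
      rcases n'' with _ | m
      · have : theta K R V W r D'' = 0 := by simpa using h'' [r] rfl
        rw [this, LinearMap.zero_comp, fold_zero]
      · refine ih n' m (by omega) D' (theta K R V W r D'') h' ?_ rs' (by omega)
        intro ss hss
        have := h'' (ss ++ [r]) (by simp [hss])
        simpa [List.foldr_append] using this
    have e2 : rs'.foldr (fun r e => theta K R U W r e)
        (D''.comp (theta K R U V r D')) = 0 := by
      rcases n' with _ | m
      · have : theta K R U V r D' = 0 := by simpa using h' [r] rfl
        rw [this, LinearMap.comp_zero, fold_zero]
      · refine ih m n'' (by omega) (theta K R U V r D') D'' ?_ h'' rs' (by omega)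
        intro ss hss
        have := h' (ss ++ [r]) (by simp [hss])
        simpa [List.foldr_append] using this
    rw [e1, e2, add_zero]

end Aux

/-- Composition of strongly differential operators: if `D' : U → V` is a `K`-linear
strongly `R`-differential operator of order `≤ n'` (i.e. annihilated by every
composition of `n' + 1` commutator operators `θ_r`) and `D'' : V → W` is one of order
`≤ n''`, then `D'' ∘ D' : U → W` is a strongly `R`-differential operator of order
`≤ n' + n''`. -/
theorem stmt12 (K R : Type) [CommRing K] [CommRing R] [Algebra K R]
    (U V W : Type) [AddCommGroup U] [AddCommGroup V] [AddCommGroup W]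
    [Module K U] [Module K V] [Module K W] [Module R U] [Module R V] [Module R W]
    [IsScalarTower K R U] [IsScalarTower K R V] [IsScalarTower K R W]
    [SMulCommClass K R U] [SMulCommClass K R V] [SMulCommClass K R W]
    (n' n'' : ℕ) (D' : U →ₗ[K] V) (D'' : V →ₗ[K] W)
    (h' : ∀ rs : List R, rs.length = n' + 1 →
      rs.foldr (fun r e => theta K R U V r e) D' = 0)
    (h'' : ∀ rs : List R, rs.length = n'' + 1 →
      rs.foldr (fun r e => theta K R V W r e) D'' = 0) :
    ∀ rs : List R, rs.length = n' + n'' + 1 →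
      rs.foldr (fun r e => theta K R U W r e) (D''.comp D') = 0 :=
  key K R U V W (n' + n'') n' n'' rfl D' D'' h' h''
end

section
/- Let k be a field of characteristic zero and R = k[x_1, x_2, x_3, …] the polynomial ring in countably many variables. The operator D_ω = Σ_{i=1}^∞ ∂^i/∂x_i^i is a well-defined k-linear map R → R which is a quite R-differential operator of ordinal order ω but not a strongly R-differential operator: for every n ≥ 0, there exist r_0, …, r_n ∈ R with θ_{r_n}⋯θ_{r_0}(D_ω) ≠ 0, while for every single f ∈ R the commutator [f, D_ω] is a differential operator of finite order. -/
open MvPolynomial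

/-- The ordinal-indexed filtration on `K`-linear maps `U → V` by the ordinal order of a
differential operator: `F_0 = {e : θ_r e = 0 ∀ r}` and
`F_α = {e : θ_r e ∈ ⋃_{β<α} F_β ∀ r}`.  A quite differential operator of ordinal order
`≤ α` is an element of `F_α`. -/
noncomputable def opFilt (K R U V : Type) [CommRing K] [CommRing R] [AddCommGroup U]
    [AddCommGroup V] [Module K U] [Module K V] [Module R U] [Module R V]
    [SMulCommClass K R U] [SMulCommClass K R V] : Ordinal.{0} → Set (U →ₗ[K] V) :=
  WellFounded.fix Ordinal.lt_wf (C := fun _ => Set (U →ₗ[K] V)) fun α F =>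
    { e | ∀ r : R, theta K R U V r e = 0 ∨ ∃ β, ∃ h : β < α, theta K R U V r e ∈ F β h }

namespace Stmt13Aux

set_option linter.unusedSectionVars false

variable {k : Type} [Field k] [CharZero k]

local notation "R" => MvPolynomial ℕ+ k
local notation "θ" => theta k (MvPolynomial ℕ+ k) (MvPolynomial ℕ+ k) (MvPolynomial ℕ+ k)

noncomputable def pd (i : ℕ+) : MvPolynomial ℕ+ k →ₗ[k] MvPolynomial ℕ+ k :=
  (pderiv i).toLinearMap

@[simp] lemma pd_apply (i : ℕ+) (g : R) : pd i g = pderiv i g := rfl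

lemma theta_apply (r : R) (e : R →ₗ[k] R) (g : R) :
    θ r e g = r * e g - e (r * g) := rfl

lemma theta_zero (r : R) : θ r (0 : R →ₗ[k] R) = 0 := by
  refine LinearMap.ext fun g => ?_; simp [theta_apply]

lemma theta_add (r : R) (e e' : R →ₗ[k] R) : θ r (e + e') = θ r e + θ r e' := by
  refine LinearMap.ext fun g => ?_
  simp only [theta_apply, LinearMap.add_apply, mul_add]
  ring

lemma theta_smul (r : R) (c : k) (e : R →ₗ[k] R) : θ r (c • e) = c • θ r e := by
  refine LinearMap.ext fun g => ?_
  simp [theta_apply, smul_sub, mul_smul_comm]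

lemma foldr_zero (rs : List R) : rs.foldr (fun r e => θ r e) 0 = 0 := by
  induction rs with
  | nil => rfl
  | cons r rs ih => simp [List.foldr_cons, ih, theta_zero]

lemma foldr_add (rs : List R) (e e' : R →ₗ[k] R) :
    rs.foldr (fun r e => θ r e) (e + e') =
      rs.foldr (fun r e => θ r e) e + rs.foldr (fun r e => θ r e) e' := by
  induction rs with
  | nil => rfl
  | cons r rs ih => simp [List.foldr_cons, ih, theta_add]

/-- strongly of order `< n` : every composition of `n` thetas kills `e`. -/
def Str (n : ℕ) (e : MvPolynomial ℕ+ k →ₗ[k] MvPolynomial ℕ+ k) : Prop :=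
  ∀ rs : List R, rs.length = n → rs.foldr (fun r e => θ r e) e = 0

lemma Str_zero (n : ℕ) : Str n (0 : R →ₗ[k] R) := fun rs _ => foldr_zero rs

lemma Str_add {n : ℕ} {e e' : R →ₗ[k] R} (h : Str n e) (h' : Str n e') :
    Str n (e + e') := fun rs hl => by
  rw [foldr_add, h rs hl, h' rs hl, add_zero]

lemma Str_succ {n : ℕ} {e : R →ₗ[k] R} (h : Str n e) : Str (n + 1) e := by
  intro rs hl
  cases rs with
  | nil => simp at hl
  | cons r rs =>
    simp only [List.length_cons, Nat.add_right_cancel_iff] at hl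
    simp [List.foldr_cons, h rs hl, theta_zero]

lemma Str_mono {m n : ℕ} (hmn : m ≤ n) {e : R →ₗ[k] R} (h : Str m e) : Str n e := by
  induction hmn with
  | refl => exact h
  | step _ ih => exact Str_succ (by exact ih)

lemma Str_theta {n : ℕ} {e : R →ₗ[k] R} (h : Str (n + 1) e) (r : R) :
    Str n (θ r e) := by
  intro rs hl
  have : rs.foldr (fun r e => θ r e) (θ r e) = (rs ++ [r]).foldr (fun r e => θ r e) e := by
    rw [List.foldr_append]
    rfl
  rw [this]
  exact h _ (by simp [hl])

lemma theta_comp (r : R) (a b : R →ₗ[k] R) :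
    θ r (a ∘ₗ b) = (θ r a) ∘ₗ b + a ∘ₗ (θ r b) := by
  refine LinearMap.ext fun g => ?_
  simp only [theta_apply, LinearMap.add_apply, LinearMap.comp_apply, map_sub]
  ring_nf

lemma Str_comp : ∀ (N m n : ℕ) (a b : R →ₗ[k] R), m + n = N →
    Str (m + 1) a → Str (n + 1) b → Str (m + n + 1) (a ∘ₗ b) := by
  intro N
  induction N with
  | zero =>
    rintro m n a b hmn ha hb
    obtain ⟨rfl, rfl⟩ : m = 0 ∧ n = 0 := by omega
    intro rs hl
    obtain ⟨rs', r, rfl⟩ := List.eq_nil_or_concat rs |>.resolve_left (by rintro rfl; simp at hl)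
    have hr' : rs'.length = 0 := by simpa using hl
    have : rs'.foldr (fun r e => θ r e) (θ r (a ∘ₗ b)) =
        (rs' ++ [r]).foldr (fun r e => θ r e) (a ∘ₗ b) := by rw [List.foldr_append]; rfl
    rw [List.concat_eq_append, ← this, theta_comp]
    have ha0 : θ r a = 0 := ha [r] rfl
    have hb0 : θ r b = 0 := hb [r] rfl
    rw [ha0, hb0, LinearMap.zero_comp, LinearMap.comp_zero, add_zero, foldr_zero]
  | succ N ih =>
    rintro m n a b hmn ha hb
    intro rs hl
    obtain ⟨rs', r, rfl⟩ := List.eq_nil_or_concat rs |>.resolve_left (by rintro rfl; simp at hl)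
    have hr' : rs'.length = m + n := by simp at hl; omega
    have heq : (rs' ++ [r]).foldr (fun r e => θ r e) (a ∘ₗ b) =
        rs'.foldr (fun r e => θ r e) (θ r (a ∘ₗ b)) := by rw [List.foldr_append]; rfl
    rw [List.concat_eq_append, heq, theta_comp, foldr_add]
    have h1 : rs'.foldr (fun r e => θ r e) ((θ r a) ∘ₗ b) = 0 := by
      cases m with
      | zero =>
        have ha0 : θ r a = 0 := ha [r] rfl
        rw [ha0, LinearMap.zero_comp, foldr_zero]
      | succ m' =>
        have := ih m' n (θ r a) b (by omega) (Str_theta ha r) hb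
        exact this rs' (by omega)
    have h2 : rs'.foldr (fun r e => θ r e) (a ∘ₗ (θ r b)) = 0 := by
      cases n with
      | zero =>
        have hb0 : θ r b = 0 := hb [r] rfl
        rw [hb0, LinearMap.comp_zero, foldr_zero]
      | succ n' =>
        have := ih m n' a (θ r b) (by omega) ha (Str_theta hb r)
        exact this rs' (by omega)
    rw [h1, h2, add_zero]

lemma Str_pd (i : ℕ+) : Str 2 (pd i : R →ₗ[k] R) := by
  intro rs hl
  match rs, hl with
  | [s, t], _ =>
    show θ s (θ t (pd i)) = 0
    refine LinearMap.ext fun g => ?_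
    simp only [theta_apply, pd_apply, pderiv_mul, LinearMap.zero_apply]
    ring

lemma Str_pow (i : ℕ+) (a : ℕ) : Str (a + 1) ((pd i ^ a : Module.End k (MvPolynomial ℕ+ k)) : R →ₗ[k] R) := by
  induction a with
  | zero =>
    intro rs hl
    match rs, hl with
    | [r], _ =>
      show θ r (pd i ^ 0) = 0
      refine LinearMap.ext fun g => ?_
      simp [theta_apply, mul_comm]
  | succ a ih =>
    have : (pd i ^ (a + 1) : Module.End k (MvPolynomial ℕ+ k)) = (pd i ^ a) ∘ₗ pd i := by
      rw [pow_succ]; rfl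
    rw [this]
    exact Str_comp (a + 1) a 1 _ _ rfl ih (Str_pd i)

lemma pow_apply_eq_zero {i : ℕ+} {g : MvPolynomial ℕ+ k} (h : i ∉ g.vars) :
    (pd i ^ (i : ℕ)) g = 0 := by
  obtain ⟨j, hj⟩ : ∃ j, (i : ℕ) = j + 1 := ⟨(i : ℕ) - 1, by have := i.pos; omega⟩
  rw [hj, pow_succ, Module.End.mul_apply, pd_apply,
    pderiv_eq_zero_of_notMem_vars h, map_zero]

lemma supp_fin (g : MvPolynomial ℕ+ k) :
    (Function.support fun i : ℕ+ => (pd i ^ (i : ℕ) : R →ₗ[k] R) g).Finite := by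
  apply Set.Finite.subset g.vars.finite_toSet
  intro i hi
  by_contra h
  exact hi (pow_apply_eq_zero h)

noncomputable def D : MvPolynomial ℕ+ k →ₗ[k] MvPolynomial ℕ+ k where
  toFun f := ∑ᶠ i : ℕ+, (pd i ^ (i : ℕ) : R →ₗ[k] R) f
  map_add' f g := by
    rw [← finsum_add_distrib (supp_fin f) (supp_fin g)]
    exact finsum_congr fun i => map_add _ f g
  map_smul' c f := by
    rw [RingHom.id_apply, smul_finsum' c (supp_fin f)]
    exact finsum_congr fun i => map_smul _ c f

lemma D_apply (f : MvPolynomial ℕ+ k) :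
    D f = ∑ᶠ i : ℕ+, (pd i ^ (i : ℕ) : R →ₗ[k] R) f := rfl

lemma pow_mul_comm {i : ℕ+} {f : MvPolynomial ℕ+ k} (h : i ∉ f.vars) :
    ∀ (n : ℕ) (g : MvPolynomial ℕ+ k), (pd i ^ n : R →ₗ[k] R) (f * g) = f * (pd i ^ n : R →ₗ[k] R) g := by
  intro n
  induction n with
  | zero => intro g; simp
  | succ n ih =>
    intro g
    rw [pow_succ]
    simp only [Module.End.mul_apply, pd_apply]
    rw [pderiv_mul, pderiv_eq_zero_of_notMem_vars h, zero_mul, zero_add, ih]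

lemma theta_D (f : MvPolynomial ℕ+ k) :
    θ f (D : R →ₗ[k] R) = ∑ i ∈ f.vars, θ f (pd i ^ (i : ℕ) : R →ₗ[k] R) := by
  refine LinearMap.ext fun g => ?_
  have hmul : f * D g = ∑ᶠ i : ℕ+, f * (pd i ^ (i : ℕ) : R →ₗ[k] R) g := by
    rw [D_apply]
    simpa [smul_eq_mul] using smul_finsum' f (supp_fin g)
  have h1 : (Function.support fun i : ℕ+ => f * (pd i ^ (i : ℕ) : R →ₗ[k] R) g).Finite :=
    (supp_fin g).subset (by intro i hi; simp only [Function.mem_support] at hi ⊢; intro h; rw [h, mul_zero] at hi; exact hi rfl)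
  have h2 := supp_fin (k := k) (f * g)
  calc (θ f (D : R →ₗ[k] R)) g
      = f * D g - D (f * g) := rfl
    _ = ∑ᶠ i : ℕ+, (f * (pd i ^ (i : ℕ) : R →ₗ[k] R) g - (pd i ^ (i : ℕ) : R →ₗ[k] R) (f * g)) := by
        rw [hmul, D_apply, ← finsum_sub_distrib h1 h2]
    _ = ∑ i ∈ f.vars, (f * (pd i ^ (i : ℕ) : R →ₗ[k] R) g - (pd i ^ (i : ℕ) : R →ₗ[k] R) (f * g)) := by
        apply finsum_eq_sum_of_support_subset
        intro i hi
        simp only [Function.mem_support] at hi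
        by_contra h
        rw [pow_mul_comm h, sub_self] at hi
        exact hi rfl
    _ = (∑ i ∈ f.vars, θ f (pd i ^ (i : ℕ) : R →ₗ[k] R)) g := by
        rw [LinearMap.coe_sum, Finset.sum_apply]
        rfl

lemma Str_sum {n : ℕ} (s : Finset ℕ+) (F : ℕ+ → (R →ₗ[k] R))
    (h : ∀ i ∈ s, Str n (F i)) : Str n (∑ i ∈ s, F i) := by
  classical
  induction s using Finset.induction_on with
  | empty => simpa using Str_zero n
  | insert _ _ hx ih =>
    rw [Finset.sum_insert hx]
    exact Str_add (h _ (Finset.mem_insert_self _ _)) (ih fun i hi => h i (Finset.mem_insert_of_mem hi))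

lemma Str_theta_D (f : MvPolynomial ℕ+ k) :
    Str ((∑ i ∈ f.vars, (i : ℕ)) + 1) (θ f (D : R →ₗ[k] R)) := by
  rw [theta_D]
  apply Str_sum
  intro i hi
  have hle : (i : ℕ) ≤ ∑ j ∈ f.vars, (j : ℕ) :=
    Finset.single_le_sum (fun j _ => Nat.zero_le _) hi
  exact Str_mono (by omega) (Str_theta (Str_pow i (i : ℕ)) f)

lemma mem_opFilt_iff (α : Ordinal) (e : R →ₗ[k] R) :
    e ∈ opFilt k (MvPolynomial ℕ+ k) (MvPolynomial ℕ+ k) (MvPolynomial ℕ+ k) α ↔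
      ∀ r : R, θ r e = 0 ∨ ∃ β, β < α ∧
        θ r e ∈ opFilt k (MvPolynomial ℕ+ k) (MvPolynomial ℕ+ k) (MvPolynomial ℕ+ k) β := by
  have h : opFilt k (MvPolynomial ℕ+ k) (MvPolynomial ℕ+ k) (MvPolynomial ℕ+ k) α =
      { e : R →ₗ[k] R | ∀ r : R, θ r e = 0 ∨ ∃ β, ∃ _ : β < α,
        θ r e ∈ opFilt k (MvPolynomial ℕ+ k) (MvPolynomial ℕ+ k) (MvPolynomial ℕ+ k) β } := by
    conv_lhs => rw [opFilt]
    rw [WellFounded.fix_eq]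
    rfl
  rw [h]
  simp only [Set.mem_setOf_eq, exists_prop]

lemma Str_opFilt : ∀ (n : ℕ) (e : R →ₗ[k] R), Str (n + 1) e →
    e ∈ opFilt k (MvPolynomial ℕ+ k) (MvPolynomial ℕ+ k) (MvPolynomial ℕ+ k) (n : Ordinal) := by
  intro n
  induction n with
  | zero =>
    intro e he
    rw [mem_opFilt_iff]
    intro r
    exact Or.inl (he [r] rfl)
  | succ n ih =>
    intro e he
    rw [mem_opFilt_iff]
    intro r
    refine Or.inr ⟨(n : Ordinal), ?_, ih _ (Str_theta he r)⟩
    exact_mod_cast Nat.cast_lt.mpr (Nat.lt_succ_self n)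

lemma opFilt_Str : ∀ (n : ℕ) (e : R →ₗ[k] R),
    e ∈ opFilt k (MvPolynomial ℕ+ k) (MvPolynomial ℕ+ k) (MvPolynomial ℕ+ k) (n : Ordinal) →
    Str (n + 1) e := by
  intro n
  induction n using Nat.strong_induction_on with
  | _ n ih =>
    intro e he rs hl
    obtain ⟨rs', r, rfl⟩ := List.eq_nil_or_concat rs |>.resolve_left (by rintro rfl; simp at hl)
    have hr' : rs'.length = n := by simp at hl; omega
    rw [List.concat_eq_append]
    have heq : (rs' ++ [r]).foldr (fun r e => θ r e) e =
        rs'.foldr (fun r e => θ r e) (θ r e) := by rw [List.foldr_append]; rfl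
    rw [heq]
    rcases (mem_opFilt_iff _ e).mp he r with h0 | ⟨β, hβ, hmem⟩
    · rw [h0, foldr_zero]
    · obtain ⟨m, rfl⟩ : ∃ m : ℕ, β = (m : Ordinal) :=
        Ordinal.lt_omega0.mp (hβ.trans (Ordinal.nat_lt_omega0 n))
      have hmn : m < n := by exact_mod_cast hβ
      exact Str_mono (by omega) (ih m hmn _ hmem) rs' hr'

lemma pow_X (m : ℕ+) : ∀ (a : ℕ) (g : MvPolynomial ℕ+ k),
    (pd m ^ (a + 1) : R →ₗ[k] R) (X m * g) =
      X m * (pd m ^ (a + 1) : R →ₗ[k] R) g + ((a + 1 : ℕ) : k) • (pd m ^ a : R →ₗ[k] R) g := by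
  intro a
  induction a with
  | zero =>
    intro g
    simp [pow_succ, pow_zero, Module.End.mul_apply, pderiv_mul, pderiv_X_self]
  | succ a ih =>
    intro g
    have h1 : (pd m ^ (a + 1 + 1) : R →ₗ[k] R) (X m * g)
        = (pd m ^ (a + 1) : R →ₗ[k] R) (pderiv m (X m * g)) := by
      rw [pow_succ, Module.End.mul_apply, pd_apply]
    have h2 : pderiv m (X m * g) = g + X m * pderiv m g := by
      rw [pderiv_mul, pderiv_X_self, one_mul]
    have h3 : (pd m ^ (a + 1) : R →ₗ[k] R) (pderiv m g) = (pd m ^ (a + 1 + 1) : R →ₗ[k] R) g := by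
      conv_rhs => rw [pow_succ, Module.End.mul_apply, pd_apply]
    have h4 : (pd m ^ a : R →ₗ[k] R) (pderiv m g) = (pd m ^ (a + 1) : R →ₗ[k] R) g := by
      conv_rhs => rw [pow_succ, Module.End.mul_apply, pd_apply]
    rw [h1, h2, map_add, ih (pderiv m g), h3, h4]
    have hc : ((a + 1 + 1 : ℕ) : k) = ((a + 1 : ℕ) : k) + 1 := by push_cast; ring
    rw [hc, add_smul, one_smul]
    abel

lemma theta_X_pow (m : ℕ+) (a : ℕ) :
    θ (X m) ((pd m ^ (a + 1) : Module.End k (MvPolynomial ℕ+ k)) : R →ₗ[k] R)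
      = (-((a + 1 : ℕ) : k)) • (pd m ^ a : R →ₗ[k] R) := by
  refine LinearMap.ext fun g => ?_
  rw [theta_apply, pow_X]
  simp only [LinearMap.smul_apply, neg_smul]
  ring_nf

lemma foldr_replicate (j : ℕ) (r : R) (e : R →ₗ[k] R) :
    (List.replicate j r).foldr (fun r e => θ r e) e = (fun e => θ r e)^[j] e := by
  induction j with
  | zero => rfl
  | succ j ih =>
    rw [List.replicate_succ, List.foldr_cons, ih]
    simp only [Function.iterate_succ_apply']

lemma iter_theta_X (m : ℕ+) (a : ℕ) : ∀ j, j ≤ a →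
    (fun e => θ (X m) e)^[j] ((pd m ^ a : Module.End k (MvPolynomial ℕ+ k)) : R →ₗ[k] R)
      = (((-1) ^ j * (a.descFactorial j : ℕ) : k)) • (pd m ^ (a - j) : R →ₗ[k] R) := by
  intro j
  induction j with
  | zero => intro _; simp
  | succ j ih =>
    intro hj
    rw [Function.iterate_succ_apply', ih (by omega), theta_smul]
    obtain ⟨b, hb⟩ : ∃ b, a - j = b + 1 := ⟨a - j - 1, by omega⟩
    rw [hb, theta_X_pow, smul_smul]
    have hb2 : a - (j + 1) = b := by omega
    rw [hb2]
    congr 1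
    have hd : (a.descFactorial (j + 1) : ℕ) = (a - j) * a.descFactorial j := Nat.descFactorial_succ a j
    rw [hd, hb]
    push_cast
    ring

lemma foldr_ne (n : ℕ) :
    (List.replicate (n + 1) (X ⟨n + 1, Nat.succ_pos n⟩ : MvPolynomial ℕ+ k)).foldr
      (fun r e => θ r e) (D : R →ₗ[k] R) ≠ 0 := by
  set m : ℕ+ := ⟨n + 1, Nat.succ_pos n⟩ with hm
  have hmn : (m : ℕ) = n + 1 := rfl
  rw [foldr_replicate]
  have h1 : θ (X m) (D : R →ₗ[k] R) = θ (X m) ((pd m ^ (m : ℕ) : Module.End k (MvPolynomial ℕ+ k)) : R →ₗ[k] R) := by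
    rw [theta_D, vars_X, Finset.sum_singleton]
  have h2 : (fun e => θ (X m) e)^[n + 1] (D : R →ₗ[k] R)
      = (fun e => θ (X m) e)^[n + 1] ((pd m ^ (m : ℕ) : Module.End k (MvPolynomial ℕ+ k)) : R →ₗ[k] R) := by
    rw [Function.iterate_succ_apply, Function.iterate_succ_apply]
    show (fun e => θ (X m) e)^[n] (θ (X m) (D : R →ₗ[k] R)) = _
    rw [h1]
  rw [h2, hmn, iter_theta_X m (n + 1) (n + 1) le_rfl]
  have hfac : (((n + 1).factorial : ℕ) : k) ≠ 0 := Nat.cast_ne_zero.mpr (Nat.factorial_ne_zero (n + 1))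
  have hc : ((-1) ^ (n + 1) * ((n + 1).descFactorial (n + 1) : ℕ) : k) ≠ 0 := by
    rw [Nat.descFactorial_self]
    exact mul_ne_zero (pow_ne_zero _ (neg_ne_zero.mpr one_ne_zero)) hfac
  intro h
  have := congrArg (fun e : R →ₗ[k] R => e 1) h
  simp only [Nat.sub_self, pow_zero, LinearMap.smul_apply, LinearMap.zero_apply] at this
  rw [Module.End.one_apply] at this
  exact hc (by simpa using (smul_eq_zero.mp this).resolve_right one_ne_zero)

end Stmt13Aux

/-- For `R = k[x_1, x_2, x_3, …]` over a field `k` of characteristic zero, the operator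
`D_ω = Σ_{i=1}^∞ ∂^i/∂x_i^i` is a well-defined `k`-linear map `R → R`; it is a quite
`R`-differential operator of ordinal order exactly `ω`, but not a strongly
`R`-differential operator: for every `n` there exist `r_0, …, r_n ∈ R` with
`θ_{r_n} ⋯ θ_{r_0} (D_ω) ≠ 0`, while for every single `f ∈ R` the commutator
`[f, D_ω] = θ_f(D_ω)` is a differential operator of finite order. -/
theorem stmt13 (k : Type) [Field k] [CharZero k] :
    ∃ D : MvPolynomial ℕ+ k →ₗ[k] MvPolynomial ℕ+ k,
      (∀ f : MvPolynomial ℕ+ k,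
        D f = ∑ᶠ i : ℕ+, (fun g => MvPolynomial.pderiv i g)^[(i : ℕ)] f) ∧
      D ∈ opFilt k (MvPolynomial ℕ+ k) (MvPolynomial ℕ+ k) (MvPolynomial ℕ+ k)
          Ordinal.omega0 ∧
      (∀ β < Ordinal.omega0,
        D ∉ opFilt k (MvPolynomial ℕ+ k) (MvPolynomial ℕ+ k) (MvPolynomial ℕ+ k) β) ∧
      (∀ n : ℕ, ∃ rs : List (MvPolynomial ℕ+ k), rs.length = n + 1 ∧
        rs.foldr (fun r e =>
          theta k (MvPolynomial ℕ+ k) (MvPolynomial ℕ+ k) (MvPolynomial ℕ+ k) r e) D ≠ 0) ∧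
      (∀ f : MvPolynomial ℕ+ k, ∃ n : ℕ, ∀ rs : List (MvPolynomial ℕ+ k),
        rs.length = n + 1 →
        rs.foldr (fun r e =>
            theta k (MvPolynomial ℕ+ k) (MvPolynomial ℕ+ k) (MvPolynomial ℕ+ k) r e)
          (theta k (MvPolynomial ℕ+ k) (MvPolynomial ℕ+ k) (MvPolynomial ℕ+ k) f D)
          = 0) := by
  refine ⟨Stmt13Aux.D, ?_, ?_, ?_, ?_, ?_⟩
  · intro f
    rw [Stmt13Aux.D_apply]
    refine finsum_congr fun i => ?_
    rw [Module.End.pow_apply]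
    rfl
  · rw [Stmt13Aux.mem_opFilt_iff]
    intro r
    exact Or.inr ⟨((∑ i ∈ r.vars, (i : ℕ) : ℕ) : Ordinal), Ordinal.nat_lt_omega0 _,
      Stmt13Aux.Str_opFilt _ _ (Stmt13Aux.Str_theta_D r)⟩
  · intro β hβ hmem
    obtain ⟨n, rfl⟩ := Ordinal.lt_omega0.mp hβ
    have hs := Stmt13Aux.opFilt_Str n _ hmem
    exact Stmt13Aux.foldr_ne n (hs _ (by simp))
  · intro n
    exact ⟨List.replicate (n + 1) (X ⟨n + 1, Nat.succ_pos n⟩), by simp, Stmt13Aux.foldr_ne n⟩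
  · intro f
    exact ⟨∑ i ∈ f.vars, (i : ℕ), fun rs hl => Stmt13Aux.Str_theta_D f rs hl⟩
end

section
/- Let k be a field and R = k[x_1, x_2, x_3, …]. The operator D_∞ = ∂/∂x_1 + ∂²/(∂x_1 ∂x_2) + ∂³/(∂x_1 ∂x_2 ∂x_3) + ⋯ is a well-defined k-linear map R → R satisfying θ_{x_i}(θ_{x_i}(D_∞)) = 0 for every i (so D_∞ is an R-differential operator of x_i-order ≤ 1 for every i), but for every n ≥ 1, θ_{x_n}θ_{x_{n-1}}⋯θ_{x_1}(D_∞) ≠ 0; hence D_∞ is an R-differential operator that is not a quite R-differential operator. -/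
open MvPolynomial

/-- The `n`-th composition of partial derivatives `∂^n/(∂x_1 ∂x_2 ⋯ ∂x_n)` on
`k[x_1, x_2, x_3, …]`. -/
noncomputable def dchain (k : Type) [Field k] : ℕ → MvPolynomial ℕ+ k → MvPolynomial ℕ+ k
  | 0, f => f
  | n + 1, f => MvPolynomial.pderiv (⟨n + 1, Nat.succ_pos n⟩ : ℕ+) (dchain k n f)

/-- The iterated commutator `θ_{x_n} θ_{x_{n-1}} ⋯ θ_{x_1}(e)`. -/
noncomputable def tchain (k : Type) [Field k] :
    ℕ → (MvPolynomial ℕ+ k →ₗ[k] MvPolynomial ℕ+ k) →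
      (MvPolynomial ℕ+ k →ₗ[k] MvPolynomial ℕ+ k)
  | 0, e => e
  | n + 1, e => theta k (MvPolynomial ℕ+ k) (MvPolynomial ℕ+ k) (MvPolynomial ℕ+ k)
      (X (⟨n + 1, Nat.succ_pos n⟩ : ℕ+)) (tchain k n e)

namespace S14
variable (k : Type) [Field k]

lemma pderiv_comm (i j : ℕ+) (f : MvPolynomial ℕ+ k) :
    pderiv i (pderiv j f) = pderiv j (pderiv i f) := by
  induction f using MvPolynomial.induction_on with
  | C a => simp [pderiv_C]
  | add p q hp hq => simp [map_add, hp, hq]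
  | mul_X p n ih =>
    by_cases hi : n = i <;> by_cases hj : n = j <;>
      simp [pderiv_mul, pderiv_X, Pi.single_apply, hi, hj, ih, map_add] <;>
      split_ifs <;> simp_all <;> ring

def v (m : ℕ) : ℕ+ := ⟨m + 1, Nat.succ_pos m⟩

@[simp] lemma v_coe (m : ℕ) : ((v m : ℕ+) : ℕ) = m + 1 := rfl

lemma v_ne {a b : ℕ} (h : a ≠ b) : v a ≠ v b := by
  intro hab
  exact h (by have := congrArg (fun x : ℕ+ => (x : ℕ)) hab; simpa using this)

noncomputable def dtail (s : ℕ) : ℕ → MvPolynomial ℕ+ k → MvPolynomial ℕ+ k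
  | 0, f => f
  | n + 1, f => pderiv (v (s + n)) (dtail s n f)

lemma dtail_zero (s : ℕ) (f : MvPolynomial ℕ+ k) : dtail k s 0 f = f := rfl

lemma dtail_succ (s n : ℕ) (f : MvPolynomial ℕ+ k) :
    dtail k s (n + 1) f = pderiv (v (s + n)) (dtail k s n f) := rfl

lemma dtail_succ' (s n c : ℕ) (hc : s + n = c) (f : MvPolynomial ℕ+ k) :
    dtail k s (n + 1) f = pderiv (v c) (dtail k s n f) := by
  subst hc; rfl

lemma dtail_add (s n : ℕ) (f g : MvPolynomial ℕ+ k) :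
    dtail k s n (f + g) = dtail k s n f + dtail k s n g := by
  induction n with
  | zero => rfl
  | succ n ih => simp [dtail_succ, ih, map_add]

lemma dtail_smul (s n : ℕ) (c : k) (f : MvPolynomial ℕ+ k) :
    dtail k s n (c • f) = c • dtail k s n f := by
  induction n with
  | zero => rfl
  | succ n ih => simp [dtail_succ, ih, map_smul]

/-- bound predicate -/
def Bd (N : ℕ) (f : MvPolynomial ℕ+ k) : Prop := ∀ i : ℕ+, N < (i : ℕ) → pderiv i f = 0

lemma exists_bd (f : MvPolynomial ℕ+ k) : ∃ N, Bd k N f := by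
  refine ⟨f.vars.sup (fun i => (i : ℕ)), fun i hi => ?_⟩
  apply pderiv_eq_zero_of_notMem_vars
  intro hmem
  have h2 : (i : ℕ) ≤ f.vars.sup fun j : ℕ+ => (j : ℕ) := Finset.le_sup hmem
  omega

lemma bd_mono {N M : ℕ} (h : N ≤ M) {f : MvPolynomial ℕ+ k} (hf : Bd k N f) : Bd k M f :=
  fun i hi => hf i (lt_of_le_of_lt h hi)

lemma bd_pderiv {N : ℕ} {f : MvPolynomial ℕ+ k} (hf : Bd k N f) (j : ℕ+) :
    Bd k N (pderiv j f) := fun i hi => by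
  rw [pderiv_comm]; rw [hf i hi]; simp

lemma bd_dtail {N : ℕ} {f : MvPolynomial ℕ+ k} (hf : Bd k N f) (s n : ℕ) :
    Bd k N (dtail k s n f) := by
  induction n with
  | zero => exact hf
  | succ n ih => exact bd_pderiv k ih _

lemma dtail_eq_zero {N : ℕ} {f : MvPolynomial ℕ+ k} (hf : Bd k N f) (s : ℕ) :
    ∀ n, N + 1 ≤ n → dtail k s n f = 0 := by
  intro n hn
  match n, hn with
  | m + 1, hn =>
    rw [dtail_succ]
    exact bd_dtail k hf s m (v (s + m)) (show N < ((v (s+m) : ℕ+) : ℕ) by rw [v_coe]; omega)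

lemma dtail_support_subset {N : ℕ} {f : MvPolynomial ℕ+ k} (hf : Bd k N f) (s : ℕ) :
    Function.support (fun n => dtail k s n f) ⊆ ↑(Finset.range (N + 1)) := by
  intro n hn
  simp only [Finset.coe_range, Set.mem_Iio]
  by_contra h
  exact hn (dtail_eq_zero k hf s n (by omega))

noncomputable def Tail (s : ℕ) : MvPolynomial ℕ+ k →ₗ[k] MvPolynomial ℕ+ k where
  toFun f := ∑ᶠ n, dtail k s n f
  map_add' f g := by
    show (∑ᶠ n, dtail k s n (f + g)) = (∑ᶠ n, dtail k s n f) + ∑ᶠ n, dtail k s n g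
    obtain ⟨N, hN⟩ := exists_bd k f
    obtain ⟨M, hM⟩ := exists_bd k g
    have hfg : Bd k (max N M) (f + g) := fun i hi => by
      rw [map_add, hN i (by simp at hi; omega), hM i (by simp at hi; omega), add_zero]
    rw [finsum_eq_sum_of_support_subset _ (dtail_support_subset k hfg s),
      finsum_eq_sum_of_support_subset _
        (dtail_support_subset k (bd_mono k (le_max_left N M) hN) s),
      finsum_eq_sum_of_support_subset _
        (dtail_support_subset k (bd_mono k (le_max_right N M) hM) s),
      ← Finset.sum_add_distrib]
    exact Finset.sum_congr rfl fun n _ => dtail_add k s n f g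
  map_smul' c f := by
    show (∑ᶠ n, dtail k s n (c • f)) = c • ∑ᶠ n, dtail k s n f
    obtain ⟨N, hN⟩ := exists_bd k f
    have hcf : Bd k N (c • f) := fun i hi => by
      rw [Derivation.map_smul, hN i hi, smul_zero]
    rw [finsum_eq_sum_of_support_subset _ (dtail_support_subset k hcf s),
      finsum_eq_sum_of_support_subset _ (dtail_support_subset k hN s),
      Finset.smul_sum]
    exact Finset.sum_congr rfl fun n _ => dtail_smul k s n c f

lemma Tail_apply (s : ℕ) (f : MvPolynomial ℕ+ k) : Tail k s f = ∑ᶠ n, dtail k s n f := rfl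

lemma Tail_eq_sum {N : ℕ} {f : MvPolynomial ℕ+ k} (hf : Bd k N f) (s M : ℕ) (hM : N + 1 ≤ M) :
    Tail k s f = ∑ n ∈ Finset.range M, dtail k s n f := by
  rw [Tail_apply]
  apply finsum_eq_sum_of_support_subset
  refine (dtail_support_subset k hf s).trans ?_
  simp only [Finset.coe_range]
  exact Set.Iio_subset_Iio hM

lemma bd_X_mul {N : ℕ} {f : MvPolynomial ℕ+ k} (hf : Bd k N f) {i : ℕ+} (hi : (i : ℕ) ≤ N) :
    Bd k N (X i * f) := by
  intro j hj
  have hji : i ≠ j := by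
    intro h; subst h; omega
  rw [pderiv_mul, pderiv_X_of_ne hji, hf j hj, zero_mul, mul_zero, add_zero]

/-- (B⁺): multiplication by `X i` passes through `dtail s n` when `i ≤ s` or `i > s + n`. -/
lemma dtail_X_mul {i : ℕ+} (s n : ℕ) (hi : (i : ℕ) ≤ s ∨ s + n < (i : ℕ))
    (f : MvPolynomial ℕ+ k) :
    dtail k s n (X i * f) = X i * dtail k s n f := by
  induction n with
  | zero => rfl
  | succ n ih =>
    have h1 : (i : ℕ) ≤ s ∨ s + n < (i : ℕ) := by omega
    have hne : i ≠ v (s + n) := by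
      intro h
      have : (i : ℕ) = s + n + 1 := by rw [h, v_coe]
      omega
    rw [dtail_succ, ih h1, pderiv_mul, pderiv_X_of_ne hne, zero_mul, zero_add, dtail_succ]

/-- (C'): product rule for `X_{s+t+1}` through `dtail s n` for `n ≥ t + 1`. -/
lemma dtail_X_mul_split (s t : ℕ) (f : MvPolynomial ℕ+ k) :
    ∀ n, t + 1 ≤ n →
      dtail k s n (X (v (s + t)) * f) =
        X (v (s + t)) * dtail k s n f +
          dtail k (s + t + 1) (n - (t + 1)) (dtail k s t f) := by
  intro n hn
  induction n, hn using Nat.le_induction with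
  | base =>
    rw [dtail_succ, dtail_X_mul k s t (Or.inr (by rw [v_coe]; omega)),
      pderiv_mul, pderiv_X_self, one_mul, dtail_succ]
    simp only [Nat.sub_self, dtail_zero]
    rw [add_comm]
  | succ n hn ih =>
    have hne : v (s + t) ≠ v (s + n) := v_ne (by omega)
    rw [dtail_succ, ih, map_add, pderiv_mul, pderiv_X_of_ne hne, zero_mul, zero_add,
      ← dtail_succ]
    congr 1
    have h2 : n + 1 - (t + 1) = (n - (t + 1)) + 1 := by omega
    rw [h2, dtail_succ' k (s + t + 1) (n - (t + 1)) (s + n) (by omega)]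

lemma Tail_X_mul_le {i : ℕ+} (s : ℕ) (hi : (i : ℕ) ≤ s) (f : MvPolynomial ℕ+ k) :
    Tail k s (X i * f) = X i * Tail k s f := by
  obtain ⟨N₁, hN₁⟩ := exists_bd k f
  obtain ⟨N₂, hN₂⟩ := exists_bd k (X i * f)
  rw [Tail_eq_sum k (bd_mono k (le_max_right N₁ N₂) hN₂) s (max N₁ N₂ + 1) (by omega),
      Tail_eq_sum k (bd_mono k (le_max_left N₁ N₂) hN₁) s (max N₁ N₂ + 1) (by omega),
      Finset.mul_sum]
  exact Finset.sum_congr rfl fun n _ => dtail_X_mul k s n (Or.inl hi) f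

lemma Tail_X_mul_split (s t : ℕ) (f : MvPolynomial ℕ+ k) :
    Tail k s (X (v (s + t)) * f)
      = X (v (s + t)) * Tail k s f + Tail k (s + t + 1) (dtail k s t f) := by
  obtain ⟨N₁, hN₁⟩ := exists_bd k f
  obtain ⟨N₂, hN₂⟩ := exists_bd k (X (v (s + t)) * f)
  set N := max N₁ N₂ with hNdef
  have hf : Bd k N f := bd_mono k (le_max_left _ _) hN₁
  have hXf : Bd k N (X (v (s + t)) * f) := bd_mono k (le_max_right _ _) hN₂
  have hg : Bd k N (dtail k s t f) := bd_dtail k hf s t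
  rw [Tail_eq_sum k hXf s ((t + 1) + (N + 1)) (by omega),
      Tail_eq_sum k hf s ((t + 1) + (N + 1)) (by omega),
      Tail_eq_sum k hg (s + t + 1) (N + 1) (by omega),
      Finset.sum_range_add, Finset.sum_range_add (fun n => dtail k s n f)]
  have h1 : ∑ n ∈ Finset.range (t + 1), dtail k s n (X (v (s + t)) * f)
      = ∑ n ∈ Finset.range (t + 1), X (v (s + t)) * dtail k s n f := by
    refine Finset.sum_congr rfl fun n hn => ?_
    rw [Finset.mem_range] at hn
    exact dtail_X_mul k s n (Or.inr (by rw [v_coe]; omega)) f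
  have h2 : ∑ j ∈ Finset.range (N + 1), dtail k s (t + 1 + j) (X (v (s + t)) * f)
      = ∑ j ∈ Finset.range (N + 1),
          (X (v (s + t)) * dtail k s (t + 1 + j) f
            + dtail k (s + t + 1) j (dtail k s t f)) := by
    refine Finset.sum_congr rfl fun j _ => ?_
    have h3 := dtail_X_mul_split k s t f (t + 1 + j) (by omega)
    rwa [show t + 1 + j - (t + 1) = j by omega] at h3
  rw [h1, h2, Finset.sum_add_distrib, ← Finset.mul_sum, ← Finset.mul_sum]
  ring

lemma Tail_one (s : ℕ) : Tail k s (1 : MvPolynomial ℕ+ k) = 1 := by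
  have h1 : Bd k 0 (1 : MvPolynomial ℕ+ k) := fun i _ => pderiv_one
  rw [Tail_eq_sum k h1 s 1 le_rfl, Finset.sum_range_one, dtail_zero]

/-- dtail as a linear map. -/
noncomputable def dtailL (s n : ℕ) : MvPolynomial ℕ+ k →ₗ[k] MvPolynomial ℕ+ k where
  toFun := dtail k s n
  map_add' := dtail_add k s n
  map_smul' c f := by simp [dtail_smul]

@[simp] lemma dtailL_apply (s n : ℕ) (f : MvPolynomial ℕ+ k) :
    dtailL k s n f = dtail k s n f := rfl

lemma theta_apply (r : MvPolynomial ℕ+ k)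
    (e : MvPolynomial ℕ+ k →ₗ[k] MvPolynomial ℕ+ k) (f : MvPolynomial ℕ+ k) :
    theta k (MvPolynomial ℕ+ k) (MvPolynomial ℕ+ k) (MvPolynomial ℕ+ k) r e f
      = r * e f - e (r * f) := rfl

lemma theta_sub (r : MvPolynomial ℕ+ k)
    (e e' : MvPolynomial ℕ+ k →ₗ[k] MvPolynomial ℕ+ k) :
    theta k (MvPolynomial ℕ+ k) (MvPolynomial ℕ+ k) (MvPolynomial ℕ+ k) r (e - e')
      = theta k (MvPolynomial ℕ+ k) (MvPolynomial ℕ+ k) (MvPolynomial ℕ+ k) r e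
        - theta k (MvPolynomial ℕ+ k) (MvPolynomial ℕ+ k) (MvPolynomial ℕ+ k) r e' := by
  refine LinearMap.ext fun f => ?_
  simp only [theta_apply, LinearMap.sub_apply]
  ring

lemma theta_smul (r : MvPolynomial ℕ+ k) (c : k)
    (e : MvPolynomial ℕ+ k →ₗ[k] MvPolynomial ℕ+ k) :
    theta k (MvPolynomial ℕ+ k) (MvPolynomial ℕ+ k) (MvPolynomial ℕ+ k) r (c • e)
      = c • theta k (MvPolynomial ℕ+ k) (MvPolynomial ℕ+ k) (MvPolynomial ℕ+ k) r e := by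
  refine LinearMap.ext fun f => ?_
  simp only [theta_apply, LinearMap.smul_apply, smul_sub, mul_smul_comm]

lemma theta_add (r : MvPolynomial ℕ+ k)
    (e e' : MvPolynomial ℕ+ k →ₗ[k] MvPolynomial ℕ+ k) :
    theta k (MvPolynomial ℕ+ k) (MvPolynomial ℕ+ k) (MvPolynomial ℕ+ k) r (e + e')
      = theta k (MvPolynomial ℕ+ k) (MvPolynomial ℕ+ k) (MvPolynomial ℕ+ k) r e
        + theta k (MvPolynomial ℕ+ k) (MvPolynomial ℕ+ k) (MvPolynomial ℕ+ k) r e' := by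
  refine LinearMap.ext fun f => ?_
  simp only [theta_apply, LinearMap.add_apply]
  ring

lemma theta_neg (r : MvPolynomial ℕ+ k)
    (e : MvPolynomial ℕ+ k →ₗ[k] MvPolynomial ℕ+ k) :
    theta k (MvPolynomial ℕ+ k) (MvPolynomial ℕ+ k) (MvPolynomial ℕ+ k) r (-e)
      = - theta k (MvPolynomial ℕ+ k) (MvPolynomial ℕ+ k) (MvPolynomial ℕ+ k) r e := by
  refine LinearMap.ext fun f => ?_
  simp only [theta_apply, LinearMap.neg_apply]
  ring

lemma theta_id (r : MvPolynomial ℕ+ k) :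
    theta k (MvPolynomial ℕ+ k) (MvPolynomial ℕ+ k) (MvPolynomial ℕ+ k) r LinearMap.id
      = 0 := by
  refine LinearMap.ext fun f => ?_
  simp [theta_apply]

/-- Commutator of `X_{s+t+1}` with `Tail s`. -/
lemma theta_Tail (s t : ℕ) :
    theta k (MvPolynomial ℕ+ k) (MvPolynomial ℕ+ k) (MvPolynomial ℕ+ k) (X (v (s + t)))
        (Tail k s)
      = -((Tail k (s + t + 1)).comp (dtailL k s t)) := by
  refine LinearMap.ext fun f => ?_
  rw [theta_apply, Tail_X_mul_split k s t f]
  simp only [LinearMap.neg_apply, LinearMap.comp_apply, dtailL_apply]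
  ring

/-- The operator `D_∞`. -/
noncomputable def Dop : MvPolynomial ℕ+ k →ₗ[k] MvPolynomial ℕ+ k :=
  Tail k 0 - LinearMap.id

lemma dchain_eq (n : ℕ) (f : MvPolynomial ℕ+ k) : dchain k n f = dtail k 0 n f := by
  induction n with
  | zero => rfl
  | succ n ih =>
    show pderiv (v n) (dchain k n f) = pderiv (v (0 + n)) (dtail k 0 n f)
    rw [ih, congrArg v (Nat.zero_add n)]

lemma Dop_apply (f : MvPolynomial ℕ+ k) : Dop k f = ∑ᶠ n, dchain k (n + 1) f := by
  obtain ⟨N, hN⟩ := exists_bd k f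
  have hs : Function.support (fun n => dchain k (n + 1) f) ⊆ ↑(Finset.range (N + 1)) := by
    intro n hn
    simp only [Finset.coe_range, Set.mem_Iio]
    by_contra h
    refine hn ?_
    show dchain k (n + 1) f = 0
    rw [dchain_eq]
    exact dtail_eq_zero k hN 0 (n + 1) (by omega)
  rw [finsum_eq_sum_of_support_subset _ hs]
  show Tail k 0 f - LinearMap.id f = _
  rw [LinearMap.id_apply, Tail_eq_sum k hN 0 (N + 2) (by omega),
    Finset.sum_range_succ' (fun n => dtail k 0 n f) (N + 1), dtail_zero,
    add_sub_cancel_right]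
  exact Finset.sum_congr rfl fun n _ => (dchain_eq k (n + 1) f).symm

lemma Tail_comp_dtailL_zero (a b : ℕ) :
    (Tail k a).comp (dtailL k b 0) = Tail k a :=
  LinearMap.ext fun _ => rfl

/-- `θ_{x_i}(θ_{x_i}(D)) = 0`. -/
lemma theta_XX_Dop (i : ℕ+) :
    theta k (MvPolynomial ℕ+ k) (MvPolynomial ℕ+ k) (MvPolynomial ℕ+ k) (X i) (theta k (MvPolynomial ℕ+ k) (MvPolynomial ℕ+ k) (MvPolynomial ℕ+ k) (X i) (Dop k)) = 0 := by
  obtain ⟨t, ht⟩ : ∃ t : ℕ, (i : ℕ) = t + 1 :=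
    ⟨(i : ℕ) - 1, by have h := i.pos; omega⟩
  have hi : i = v (0 + t) := by
    apply Subtype.ext
    show (i : ℕ) = 0 + t + 1
    omega
  rw [hi]
  have h1 : theta k (MvPolynomial ℕ+ k) (MvPolynomial ℕ+ k) (MvPolynomial ℕ+ k) (X (v (0 + t))) (Dop k)
      = -((Tail k (0 + t + 1)).comp (dtailL k 0 t)) := by
    unfold Dop
    rw [theta_sub, theta_Tail, theta_id, sub_zero]
  rw [h1, theta_neg, neg_eq_zero]
  refine LinearMap.ext fun f => ?_
  rw [theta_apply]
  simp only [LinearMap.comp_apply, dtailL_apply, LinearMap.zero_apply]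
  rw [dtail_X_mul k 0 t (Or.inr (by rw [v_coe]; omega)) f,
    Tail_X_mul_le k (0 + t + 1) (by rw [v_coe])]
  ring

lemma C_smul_Tail_ne_zero (s : ℕ) {c : k} (hc : c ≠ 0) : c • Tail k s ≠ 0 := by
  intro h
  have h1 := congrArg (fun e : (MvPolynomial ℕ+ k) →ₗ[k] (MvPolynomial ℕ+ k) => e 1) h
  simp only [LinearMap.smul_apply, Tail_one, LinearMap.zero_apply, smul_eq_C_mul,
    mul_one] at h1
  exact hc (by simpa using h1)

lemma tchain_Dop (n : ℕ) :
    tchain k (n + 1) (Dop k) = ((-1 : k) ^ (n + 1)) • Tail k (n + 1) := by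
  induction n with
  | zero =>
    show theta k (MvPolynomial ℕ+ k) (MvPolynomial ℕ+ k) (MvPolynomial ℕ+ k) (X (v 0)) (Dop k) = _
    have h0 : v 0 = v (0 + 0) := rfl
    rw [h0]
    unfold Dop
    rw [theta_sub, theta_Tail, theta_id, sub_zero, Tail_comp_dtailL_zero]
    show -Tail k (0 + 1) = _
    rw [pow_one]
    exact (neg_one_smul k (Tail k (0 + 1))).symm
  | succ n ih =>
    show theta k (MvPolynomial ℕ+ k) (MvPolynomial ℕ+ k) (MvPolynomial ℕ+ k) (X (v (n + 1))) (tchain k (n + 1) (Dop k)) = _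
    rw [ih]
    have h0 : v (n + 1) = v ((n + 1) + 0) := rfl
    rw [h0, theta_smul, theta_Tail, Tail_comp_dtailL_zero, smul_neg, ← neg_smul,
      ← neg_one_mul, ← pow_succ']

lemma tchain_Dop_ne_zero (n : ℕ) : tchain k (n + 1) (Dop k) ≠ 0 := by
  rw [tchain_Dop]
  exact C_smul_Tail_ne_zero k (n + 1) (pow_ne_zero _ (neg_ne_zero.mpr one_ne_zero))

lemma opFilt_unfold (β : Ordinal.{0}) :
    opFilt k (MvPolynomial ℕ+ k) (MvPolynomial ℕ+ k) (MvPolynomial ℕ+ k) β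
      = { e | ∀ r : (MvPolynomial ℕ+ k), theta k (MvPolynomial ℕ+ k) (MvPolynomial ℕ+ k) (MvPolynomial ℕ+ k) r e = 0 ∨
          ∃ γ, ∃ _ : γ < β, theta k (MvPolynomial ℕ+ k) (MvPolynomial ℕ+ k) (MvPolynomial ℕ+ k) r e ∈ opFilt k (MvPolynomial ℕ+ k) (MvPolynomial ℕ+ k) (MvPolynomial ℕ+ k) γ } := by
  show WellFounded.fix Ordinal.lt_wf _ β = _
  rw [WellFounded.fix_eq]
  rfl

lemma smul_Tail_notMem (β : Ordinal.{0}) :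
    ∀ (s : ℕ) (c : k), c ≠ 0 → c • Tail k s ∉ opFilt k (MvPolynomial ℕ+ k) (MvPolynomial ℕ+ k) (MvPolynomial ℕ+ k) β := by
  induction β using Ordinal.induction with
  | h β IH =>
    intro s c hc hmem
    rw [opFilt_unfold] at hmem
    have h1 : theta k (MvPolynomial ℕ+ k) (MvPolynomial ℕ+ k) (MvPolynomial ℕ+ k) (X (v (s + 0))) (c • Tail k s)
        = (-c) • Tail k (s + 1) := by
      rw [theta_smul, theta_Tail, Tail_comp_dtailL_zero, smul_neg, ← neg_smul]
    rcases hmem (X (v (s + 0))) with h2 | ⟨γ, hγ, h2⟩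
    · rw [h1] at h2
      exact C_smul_Tail_ne_zero k (s + 1) (neg_ne_zero.mpr hc) h2
    · rw [h1] at h2
      exact IH γ hγ (s + 1) (-c) (neg_ne_zero.mpr hc) h2

lemma Dop_notMem (β : Ordinal.{0}) : Dop k ∉ opFilt k (MvPolynomial ℕ+ k) (MvPolynomial ℕ+ k) (MvPolynomial ℕ+ k) β := by
  intro hmem
  rw [opFilt_unfold] at hmem
  have h1 : theta k (MvPolynomial ℕ+ k) (MvPolynomial ℕ+ k) (MvPolynomial ℕ+ k) (X (v (0 + 0))) (Dop k)
      = (-1 : k) • Tail k 1 := by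
    unfold Dop
    rw [theta_sub, theta_Tail, theta_id, sub_zero, Tail_comp_dtailL_zero]
    show -Tail k 1 = _
    exact (neg_one_smul k (Tail k 1)).symm
  rcases hmem (X (v (0 + 0))) with h2 | ⟨γ, hγ, h2⟩
  · rw [h1] at h2
    exact C_smul_Tail_ne_zero k 1 (neg_ne_zero.mpr one_ne_zero) h2
  · rw [h1] at h2
    exact smul_Tail_notMem k γ 1 (-1) (neg_ne_zero.mpr one_ne_zero) h2

/-- `theta r` as an endomorphism of the space of `k`-linear operators. -/
noncomputable def Th (r : (MvPolynomial ℕ+ k)) :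
    Module.End k ((MvPolynomial ℕ+ k) →ₗ[k] (MvPolynomial ℕ+ k)) where
  toFun e := theta k (MvPolynomial ℕ+ k) (MvPolynomial ℕ+ k) (MvPolynomial ℕ+ k) r e
  map_add' := theta_add k r
  map_smul' c e := by simp [theta_smul]

@[simp] lemma Th_apply (r : (MvPolynomial ℕ+ k)) (e : (MvPolynomial ℕ+ k) →ₗ[k] (MvPolynomial ℕ+ k)) :
    Th k r e = theta k (MvPolynomial ℕ+ k) (MvPolynomial ℕ+ k) (MvPolynomial ℕ+ k) r e := rfl

/-- Left composition with multiplication by `p`. -/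
noncomputable def Lh (p : (MvPolynomial ℕ+ k)) :
    Module.End k ((MvPolynomial ℕ+ k) →ₗ[k] (MvPolynomial ℕ+ k)) where
  toFun e := p • e
  map_add' e e' := smul_add p e e'
  map_smul' c e := by simp [smul_comm p c e]

@[simp] lemma Lh_apply (p : (MvPolynomial ℕ+ k)) (e : (MvPolynomial ℕ+ k) →ₗ[k] (MvPolynomial ℕ+ k)) (f : (MvPolynomial ℕ+ k)) :
    Lh k p e f = p * e f := rfl

/-- Right composition with multiplication by `p`. -/
noncomputable def Rh (p : (MvPolynomial ℕ+ k)) :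
    Module.End k ((MvPolynomial ℕ+ k) →ₗ[k] (MvPolynomial ℕ+ k)) where
  toFun e := e.comp (p • LinearMap.id)
  map_add' e e' := LinearMap.add_comp _ _ _
  map_smul' c e := LinearMap.smul_comp _ _ _

@[simp] lemma Rh_apply (p : (MvPolynomial ℕ+ k)) (e : (MvPolynomial ℕ+ k) →ₗ[k] (MvPolynomial ℕ+ k)) (f : (MvPolynomial ℕ+ k)) :
    Rh k p e f = e (p * f) := rfl

lemma Th_C (a : k) : Th k (C a) = 0 := by
  refine LinearMap.ext fun e => LinearMap.ext fun f => ?_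
  simp [theta_apply, C_mul', map_smul]

lemma Th_add (p q : (MvPolynomial ℕ+ k)) : Th k (p + q) = Th k p + Th k q := by
  refine LinearMap.ext fun e => LinearMap.ext fun f => ?_
  simp only [Th_apply, theta_apply, LinearMap.add_apply, add_mul, map_add]
  ring

lemma Th_mul (p q : (MvPolynomial ℕ+ k)) : Th k (p * q) = Lh k p * Th k q + Rh k q * Th k p := by
  refine LinearMap.ext fun e => LinearMap.ext fun f => ?_
  simp only [Th_apply, theta_apply, LinearMap.add_apply, Module.End.mul_apply,
    Lh_apply, Rh_apply, mul_assoc]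
  ring

lemma commute_Th_Th (p q : (MvPolynomial ℕ+ k)) : Commute (Th k p) (Th k q) := by
  refine LinearMap.ext fun e => LinearMap.ext fun f => ?_
  simp only [Module.End.mul_apply, Th_apply, theta_apply, map_sub, mul_sub]
  rw [mul_left_comm q p f]
  ring

lemma commute_Lh_Th (p q : (MvPolynomial ℕ+ k)) : Commute (Lh k p) (Th k q) := by
  refine LinearMap.ext fun e => LinearMap.ext fun f => ?_
  simp only [Module.End.mul_apply, Th_apply, theta_apply, Lh_apply, mul_sub]
  ring

lemma commute_Rh_Th (p q : (MvPolynomial ℕ+ k)) : Commute (Rh k p) (Th k q) := by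
  refine LinearMap.ext fun e => LinearMap.ext fun f => ?_
  simp only [Module.End.mul_apply, Th_apply, theta_apply, Rh_apply]
  rw [mul_left_comm q p f]

lemma commute_Lh_Rh (p q : (MvPolynomial ℕ+ k)) : Commute (Lh k p) (Rh k q) := by
  refine LinearMap.ext fun e => LinearMap.ext fun f => ?_
  simp only [Module.End.mul_apply, Lh_apply, Rh_apply]

lemma pow_kill (x : Module.End k ((MvPolynomial ℕ+ k) →ₗ[k] (MvPolynomial ℕ+ k))) (e : (MvPolynomial ℕ+ k) →ₗ[k] (MvPolynomial ℕ+ k))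
    {m n : ℕ} (h : (x ^ m) e = 0) (hmn : m ≤ n) : (x ^ n) e = 0 := by
  rw [show n = (n - m) + m by omega, pow_add, Module.End.mul_apply, h, map_zero]

lemma binom_kill {x y : Module.End k ((MvPolynomial ℕ+ k) →ₗ[k] (MvPolynomial ℕ+ k))} (hc : Commute x y)
    (e : (MvPolynomial ℕ+ k) →ₗ[k] (MvPolynomial ℕ+ k)) {mx my : ℕ}
    (hx : (x ^ mx) e = 0) (hy : (y ^ my) e = 0) : ((x + y) ^ (mx + my)) e = 0 := by
  rw [hc.add_pow]
  rw [LinearMap.coe_sum, Finset.sum_apply]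
  refine Finset.sum_eq_zero fun j hj => ?_
  rw [Finset.mem_range] at hj
  rw [Module.End.mul_apply, Module.End.natCast_apply, map_nsmul]
  by_cases hj2 : mx ≤ j
  · rw [(hc.pow_pow j (mx + my - j)).eq, Module.End.mul_apply,
      pow_kill k x e hx hj2, map_zero, smul_zero]
  · have h3 : my ≤ mx + my - j := by omega
    rw [Module.End.mul_apply, pow_kill k y e hy h3, map_zero, smul_zero]

lemma Th_X_sq (i : ℕ+) : ((Th k (X i)) ^ 2) (Dop k) = 0 := by
  rw [pow_two, Module.End.mul_apply]
  exact theta_XX_Dop k i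

lemma nil_Dop (r : (MvPolynomial ℕ+ k)) : ∃ n : ℕ, ((Th k r) ^ (n + 1)) (Dop k) = 0 := by
  induction r using MvPolynomial.induction_on with
  | C a =>
    refine ⟨0, ?_⟩
    rw [pow_one, Th_C]
    rfl
  | add p q hp hq =>
    obtain ⟨a, ha⟩ := hp
    obtain ⟨b, hb⟩ := hq
    refine ⟨a + b + 1, ?_⟩
    have h1 := binom_kill k (commute_Th_Th k p q) (Dop k) ha hb
    rw [Th_add]
    rw [show a + b + 1 + 1 = (a + 1) + (b + 1) by omega]
    exact h1
  | mul_X p i hp =>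
    obtain ⟨a, ha⟩ := hp
    refine ⟨a + 2, ?_⟩
    rw [Th_mul]
    set A := Lh k p * Th k (X i) with hA
    set B := Rh k (X i) * Th k p with hB
    have hAB : Commute A B := by
      have c1 : Commute (Lh k p) B :=
        (commute_Lh_Rh k p (X i)).mul_right (commute_Lh_Th k p p)
      have c2 : Commute (Th k (X i)) B :=
        ((commute_Rh_Th k (X i) (X i)).symm).mul_right (commute_Th_Th k (X i) p)
      exact c1.mul_left c2
    have hA2 : (A ^ 2) (Dop k) = 0 := by
      rw [hA, (commute_Lh_Th k p (X i)).mul_pow, Module.End.mul_apply,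
        Th_X_sq, map_zero]
    have hB2 : (B ^ (a + 1)) (Dop k) = 0 := by
      rw [hB, (commute_Rh_Th k (X i) p).mul_pow, Module.End.mul_apply, ha, map_zero]
    have h1 := binom_kill k hAB (Dop k) hA2 hB2
    rw [show a + 2 + 1 = 2 + (a + 1) by omega]
    exact h1

lemma iterate_theta (r : (MvPolynomial ℕ+ k)) (m : ℕ) :
    ∀ e : (MvPolynomial ℕ+ k) →ₗ[k] (MvPolynomial ℕ+ k),
      (fun e => theta k (MvPolynomial ℕ+ k) (MvPolynomial ℕ+ k) (MvPolynomial ℕ+ k) r e)^[m] e = ((Th k r) ^ m) e := by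
  induction m with
  | zero => intro e; simp
  | succ m ih =>
    intro e
    rw [Function.iterate_succ_apply, pow_succ, Module.End.mul_apply]
    exact ih _

end S14

/-- For `R = k[x_1, x_2, x_3, …]`, the operator
`D_∞ = ∂/∂x_1 + ∂²/(∂x_1∂x_2) + ∂³/(∂x_1∂x_2∂x_3) + ⋯` is a well-defined `k`-linear
map `R → R` with `θ_{x_i}(θ_{x_i}(D_∞)) = 0` for every `i` (so `D_∞` has `x_i`-order
`≤ 1` for every `i`), but `θ_{x_n} ⋯ θ_{x_1}(D_∞) ≠ 0` for every `n ≥ 1`; hence `D_∞`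
is an `R`-differential operator that is not a quite `R`-differential operator. -/
theorem stmt14 (k : Type) [Field k] :
    ∃ D : MvPolynomial ℕ+ k →ₗ[k] MvPolynomial ℕ+ k,
      (∀ f : MvPolynomial ℕ+ k, D f = ∑ᶠ n : ℕ, dchain k (n + 1) f) ∧
      (∀ i : ℕ+,
        theta k (MvPolynomial ℕ+ k) (MvPolynomial ℕ+ k) (MvPolynomial ℕ+ k) (X i)
          (theta k (MvPolynomial ℕ+ k) (MvPolynomial ℕ+ k) (MvPolynomial ℕ+ k) (X i) D)
          = 0) ∧
      (∀ n : ℕ, tchain k (n + 1) D ≠ 0) ∧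
      (∀ r : MvPolynomial ℕ+ k, ∃ n : ℕ,
        (fun e =>
          theta k (MvPolynomial ℕ+ k) (MvPolynomial ℕ+ k) (MvPolynomial ℕ+ k) r e)^[n + 1]
          D = 0) ∧
      (∀ β : Ordinal.{0},
        D ∉ opFilt k (MvPolynomial ℕ+ k) (MvPolynomial ℕ+ k) (MvPolynomial ℕ+ k) β) := by
  refine ⟨S14.Dop k, S14.Dop_apply k, S14.theta_XX_Dop k, ?_, ?_, S14.Dop_notMem k⟩
  · intro n
    exact S14.tchain_Dop_ne_zero k n
  · intro r
    obtain ⟨n, hn⟩ := S14.nil_Dop k r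
    exact ⟨n, by rw [S14.iterate_theta k r (n + 1) (S14.Dop k)]; exact hn⟩
end

section
/- Let σ : R → S be a flat epimorphism of commutative rings (S flat as R-module, and σ an epimorphism in the category of rings). Let S be local with maximal ideal n, and put p = σ^{-1}(n). Then there is a ring isomorphism S ≅ R_p commuting with the maps from R. -/
open scoped TensorProduct

/-- Let `σ : R → S` be a flat epimorphism of commutative rings (`S` is flat as an
`R`-module, and the multiplication map `S ⊗_R S → S` is an isomorphism), with `S` a
local ring with maximal ideal `n`, and let `p = σ⁻¹(n)`.  Then there is a ring
isomorphism `S ≅ R_p` commuting with the maps from `R`. -/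
theorem stmt17 (R S : Type) [CommRing R] [CommRing S] [Algebra R S] [Module.Flat R S]
    (hepi : Function.Bijective ⇑(Algebra.TensorProduct.lmul' R : S ⊗[R] S →ₐ[R] S))
    [IsLocalRing S]
    (p : Ideal R) (hp : p = (IsLocalRing.maximalIdeal S).comap (algebraMap R S))
    [p.IsPrime] :
    ∃ e : Localization.AtPrime p ≃+* S,
      ∀ r : R, e (algebraMap R (Localization.AtPrime p) r) = algebraMap R S r := by
  classical
  set n := IsLocalRing.maximalIdeal S with hn
  have hpmem : ∀ x : R, x ∈ p ↔ algebraMap R S x ∈ n :=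
    fun x => (SetLike.ext_iff.mp hp x).trans Ideal.mem_comap
  -- elements of the prime complement become units in S
  have hu : ∀ t : p.primeCompl, IsUnit (algebraMap R S t) := by
    rintro ⟨t, ht⟩
    rw [← IsLocalRing.notMem_maximalIdeal]
    exact fun hmem => ht ((hpmem t).mpr hmem)
  set A := Localization.AtPrime p with hA
  let f : A →+* S := IsLocalization.lift hu
  letI : Algebra A S := f.toAlgebra
  have halg : ∀ a : A, algebraMap A S a = f a := fun _ => rfl
  haveI : IsScalarTower R A S :=
    IsScalarTower.of_algebraMap_eq fun r => (IsLocalization.lift_eq hu r).symm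
  -- S is flat over A
  haveI : IsLocalizedModule p.primeCompl (LinearMap.id : S →ₗ[R] S) :=
    isLocalizedModule_id p.primeCompl S A
  haveI hflatA : Module.Flat A S :=
    Module.Flat.isBaseChange (R := R) (M := S) A S
      (IsLocalizedModule.isBaseChange p.primeCompl A (LinearMap.id : S →ₗ[R] S))
  -- the algebra map A → S is a local homomorphism
  have hmaps : ∀ a ∈ IsLocalRing.maximalIdeal A, algebraMap A S a ∈ n := by
    intro a ha
    obtain ⟨⟨r, t⟩, rfl⟩ := IsLocalization.mk'_surjective p.primeCompl a
    have hr : r ∈ p := by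
      by_contra hr
      exact (IsLocalRing.mem_maximalIdeal _).mp ha
        ((IsLocalization.AtPrime.isUnit_mk'_iff A p r t).mpr hr)
    have hspec : algebraMap R S r = algebraMap R S t * f (IsLocalization.mk' A r t) :=
      (IsLocalization.lift_mk'_spec (hg := hu) r (f (IsLocalization.mk' A r t)) t).mp rfl
    have hrn : algebraMap R S r ∈ n := (hpmem r).mp hr
    have htp : (t : R) ∉ p := t.2
    have htn : algebraMap R S (t : R) ∉ n := fun hmem => htp ((hpmem t).mpr hmem)
    rw [halg]
    rcases (IsLocalRing.maximalIdeal.isMaximal S).isPrime.mem_or_mem (hspec ▸ hrn) with h | h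
    · exact absurd h htn
    · exact h
  -- S is faithfully flat over A
  haveI hff : Module.FaithfullyFlat A S := by
    refine ⟨fun m hm hmtop => ?_⟩
    rw [IsLocalRing.eq_maximalIdeal hm] at hmtop
    have hle : (IsLocalRing.maximalIdeal A) • (⊤ : Submodule A S) ≤
        Submodule.restrictScalars A (n : Ideal S) := by
      refine Submodule.smul_le.mpr fun a ha s _ => ?_
      rw [Submodule.restrictScalars_mem, Algebra.smul_def]
      exact Ideal.mul_mem_right _ _ (hmaps a ha)
    rw [hmtop] at hle
    have h1 : (1 : S) ∈ n := hle (Submodule.mem_top)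
    exact (IsLocalRing.maximalIdeal.isMaximal S).ne_top (Ideal.eq_top_of_isUnit_mem _ h1 isUnit_one)
  -- key consequence of the epimorphism property
  have key : ∀ s s' : S, (s ⊗ₜ[A] s' : S ⊗[A] S) = (s * s') ⊗ₜ[A] 1 := by
    intro s s'
    have h1 : (s ⊗ₜ[R] s' : S ⊗[R] S) = (s * s') ⊗ₜ[R] 1 := by
      apply hepi.1
      simp [Algebra.TensorProduct.lmul'_apply_tmul]
    have h2 := congrArg (TensorProduct.mapOfCompatibleSMul A R R S S) h1
    simpa using h2
  -- surjectivity of f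
  have hsurj : Function.Surjective f := by
    set K := LinearMap.range (Algebra.linearMap A S) with hK
    set M := S ⧸ K with hM
    haveI : Subsingleton (S ⊗[A] M) := by
      refine subsingleton_of_forall_eq 0 fun x => ?_
      induction x using TensorProduct.induction_on with
      | zero => rfl
      | tmul s m =>
        obtain ⟨s', rfl⟩ := K.mkQ_surjective m
        have h2 := congrArg (LinearMap.lTensor S K.mkQ) (key s s')
        simp only [LinearMap.lTensor_tmul] at h2
        have h3 : K.mkQ 1 = 0 := by
          rw [Submodule.mkQ_apply, Submodule.Quotient.mk_eq_zero]
          exact ⟨1, by simp⟩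
        rw [h2, h3, TensorProduct.tmul_zero]
      | add x y hx hy => rw [hx, hy, add_zero]
    haveI : Subsingleton M := Module.FaithfullyFlat.lTensor_reflects_triviality A S M
    intro s
    have : K.mkQ s = 0 := Subsingleton.elim _ _
    rw [Submodule.mkQ_apply, Submodule.Quotient.mk_eq_zero] at this
    obtain ⟨a, ha⟩ := this
    exact ⟨a, ha⟩
  -- kernel elements of the algebra map are killed by an element outside p
  have hker : ∀ r : R, algebraMap R S r = 0 → ∃ u ∈ p.primeCompl, u * r = 0 := by
    intro r hr
    have h0 : ∑ _i : Fin 1, r • (1 : S) = 0 := by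
      simp [Algebra.smul_def, hr]
    obtain ⟨κ, a, y, hy, ha⟩ :=
      Module.Flat.isTrivialRelation_of_sum_smul_eq_zero
        (R := R) (M := S) (f := fun _ : Fin 1 => r) (x := fun _ => (1 : S)) h0
    by_contra hcon
    push_neg at hcon
    have hall : ∀ j, a 0 j ∈ p := by
      intro j
      by_contra hj
      refine hcon (a 0 j) hj ?_
      have := ha j
      simpa [mul_comm] using this
    have h1 : (1 : S) ∈ n := by
      have heq : (1 : S) = ∑ j, a 0 j • y j := hy 0
      rw [heq]
      refine Ideal.sum_mem _ fun j _ => ?_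
      rw [Algebra.smul_def]
      exact Ideal.mul_mem_right _ _ ((hpmem _).mp (hall j))
    exact (IsLocalRing.maximalIdeal.isMaximal S).ne_top (Ideal.eq_top_of_isUnit_mem _ h1 isUnit_one)
  -- injectivity of f
  have hinj : Function.Injective f := by
    rw [injective_iff_map_eq_zero]
    intro x hx
    obtain ⟨⟨r, t⟩, rfl⟩ := IsLocalization.mk'_surjective p.primeCompl x
    have hr0 : algebraMap R S r = 0 := by
      have hspec : algebraMap R S r = algebraMap R S t * f (IsLocalization.mk' A r t) :=
        (IsLocalization.lift_mk'_spec (hg := hu) r (f (IsLocalization.mk' A r t)) t).mp rfl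
      rw [hspec, hx, mul_zero]
    obtain ⟨u, hu', hur⟩ := hker r hr0
    rw [IsLocalization.mk'_eq_zero_iff]
    exact ⟨⟨u, hu'⟩, by simpa using hur⟩
  exact ⟨RingEquiv.ofBijective f ⟨hinj, hsurj⟩, fun r => IsLocalization.lift_eq hu r⟩
end

section
/- Let R → S be an epimorphism of commutative rings and B an S-S-bimodule. Denote by F and F' the natural ordinal-indexed increasing filtrations on B viewed as an R-R-bimodule and as an S-S-bimodule respectively (F_0 B = {b : rb = br for all r in the ring}, F_α B = {b : rb − br ∈ ⋃_{β<α} F_β B for all r}). Then F_α B = F'_α B for all ordinals α; in particular B is a quite quasi-module over S if and only if it is a quite quasi-module over R. -/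
open scoped TensorProduct

/-- An `S`-`S`-bimodule is encoded as an abelian group `B` with two commuting
`S`-actions, given by ring homomorphisms `l, r : S →+* AddMonoid.End B` (left and right
multiplication).  This is the ordinal-indexed increasing filtration
`F_0 B = {b : l a b = r a b for all a}`,
`F_α B = {b : l a b − r a b ∈ ⋃_{β<α} F_β B for all a}`. -/
noncomputable def Bfilt {A : Type} [CommRing A] {B : Type} [AddCommGroup B]
    (l r : A →+* AddMonoid.End B) : Ordinal.{0} → Set B :=
  WellFounded.fix Ordinal.lt_wf (C := fun _ => Set B) fun α F =>
    { b | ∀ a : A, l a b - r a b = 0 ∨ ∃ β, ∃ h : β < α, (l a b - r a b) ∈ F β h }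

section
variable {A : Type} [CommRing A] {B : Type} [AddCommGroup B]
    (l r : A →+* AddMonoid.End B)

lemma mem_Bfilt {α : Ordinal.{0}} {b : B} :
    b ∈ Bfilt l r α ↔
      ∀ a : A, l a b - r a b = 0 ∨ ∃ β, β < α ∧ (l a b - r a b) ∈ Bfilt l r β := by
  conv_lhs => rw [Bfilt, WellFounded.fix_eq]
  rw [Bfilt]
  exact Iff.of_eq (by simp only [Set.mem_setOf_eq, exists_prop])

lemma Bfilt_mono {β α : Ordinal.{0}} (h : β ≤ α) : Bfilt l r β ⊆ Bfilt l r α := by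
  intro b hb
  rw [mem_Bfilt] at hb ⊢
  intro a
  rcases hb a with h0 | ⟨γ, hγ, hm⟩
  · exact Or.inl h0
  · exact Or.inr ⟨γ, lt_of_lt_of_le hγ h, hm⟩

lemma Bfilt_zero_mem (α : Ordinal.{0}) : (0 : B) ∈ Bfilt l r α := by
  rw [mem_Bfilt]
  intro a
  simp

lemma Bfilt_map_mem (T : B →+ B)
    (hTl : ∀ a x, T (l a x) = l a (T x)) (hTr : ∀ a x, T (r a x) = r a (T x))
    (α : Ordinal.{0}) : ∀ {b : B}, b ∈ Bfilt l r α → T b ∈ Bfilt l r α := by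
  induction α using Ordinal.induction with
  | h α IH =>
    intro b hb
    rw [mem_Bfilt] at hb ⊢
    intro a
    have key : l a (T b) - r a (T b) = T (l a b - r a b) := by
      rw [map_sub, hTl, hTr]
    rcases hb a with h0 | ⟨β, hβ, hm⟩
    · left; rw [key, h0, map_zero]
    · right; exact ⟨β, hβ, key ▸ IH β hβ hm⟩

lemma Bfilt_add_mem (α : Ordinal.{0}) :
    ∀ {b c : B}, b ∈ Bfilt l r α → c ∈ Bfilt l r α → b + c ∈ Bfilt l r α := by
  induction α using Ordinal.induction with
  | h α IH =>
    intro b c hb hc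
    rw [mem_Bfilt] at hb hc ⊢
    intro a
    have key : l a (b + c) - r a (b + c) = (l a b - r a b) + (l a c - r a c) := by
      rw [map_add, map_add]; abel
    rcases hb a with h0 | ⟨β, hβ, hm⟩
    · rcases hc a with h0' | ⟨β', hβ', hm'⟩
      · left; rw [key, h0, h0', add_zero]
      · right
        exact ⟨β', hβ', by rw [key, h0, zero_add]; exact hm'⟩
    · rcases hc a with h0' | ⟨β', hβ', hm'⟩
      · right; exact ⟨β, hβ, by rw [key, h0', add_zero]; exact hm⟩
      · right
        refine ⟨max β β', max_lt hβ hβ', ?_⟩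
        rw [key]
        exact IH _ (max_lt hβ hβ') (Bfilt_mono l r (le_max_left _ _) hm)
          (Bfilt_mono l r (le_max_right _ _) hm')

lemma Bfilt_neg_mem (α : Ordinal.{0}) {b : B} (hb : b ∈ Bfilt l r α) :
    -b ∈ Bfilt l r α :=
  Bfilt_map_mem l r (AddMonoidHom.mk' (fun x => -x) (by intro x y; abel))
    (fun a x => (map_neg (l a) x).symm) (fun a x => (map_neg (r a) x).symm) α hb

end

section
variable {R S : Type} [CommRing R] [CommRing S] [Algebra R S]
    {B : Type} [AddCommGroup B] (l r : S →+* AddMonoid.End B)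

lemma app_mul (f : S →+* AddMonoid.End B) (a₁ a₂ : S) (x : B) :
    f (a₁ * a₂) x = f a₁ (f a₂ x) := by rw [map_mul]; rfl

lemma app_add (f : S →+* AddMonoid.End B) (a₁ a₂ : S) (x : B) :
    f (a₁ + a₂) x = f a₁ x + f a₂ x := by rw [map_add]; rfl

lemma key_lemma
    (hepi : Function.Bijective ⇑(Algebra.TensorProduct.lmul' R : S ⊗[R] S →ₐ[R] S))
    (hcomm : ∀ (s t : S) (b : B), l s (r t b) = r t (l s b))
    (N : AddSubgroup B) (b : B)
    (hN0 : ∀ c : R, l (algebraMap R S c) b - r (algebraMap R S c) b ∈ N)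
    (hNl : ∀ s x, x ∈ N → l s x ∈ N) (hNr : ∀ s x, x ∈ N → r s x ∈ N)
    (s : S) : l s b - r s b ∈ N := by
  letI : Module R B :=
    { smul := fun c x => l (algebraMap R S c) x
      one_smul := fun x => by
        show l (algebraMap R S 1) x = x
        rw [map_one, map_one]; rfl
      mul_smul := fun c c' x => by
        show l (algebraMap R S (c * c')) x = l (algebraMap R S c) (l (algebraMap R S c') x)
        rw [map_mul, app_mul]
      smul_zero := fun c => map_zero _
      smul_add := fun c x y => map_add _ x y
      add_smul := fun c c' x => by
        show l (algebraMap R S (c + c')) x = l (algebraMap R S c) x + l (algebraMap R S c') x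
        rw [map_add, app_add]
      zero_smul := fun x => by
        show l (algebraMap R S 0) x = 0
        rw [map_zero, map_zero]; rfl }
  have hsmul : ∀ (c : R) (x : B), c • x = l (algebraMap R S c) x := fun _ _ => rfl
  set N' : Submodule R B :=
    { carrier := N
      add_mem' := fun hx hy => N.add_mem hx hy
      zero_mem' := N.zero_mem
      smul_mem' := fun c x hx => hNl _ x hx } with hN'
  have claimA : ∀ (c : R) (a a' : S),
      l (algebraMap R S c) (l a (r a' b)) = l a (r a' (l (algebraMap R S c) b)) := by
    intro c a a'
    calc l (algebraMap R S c) (l a (r a' b)) = l (algebraMap R S c * a) (r a' b) := by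
          rw [app_mul]
      _ = l (a * algebraMap R S c) (r a' b) := by rw [mul_comm]
      _ = l a (l (algebraMap R S c) (r a' b)) := by rw [app_mul]
      _ = l a (r a' (l (algebraMap R S c) b)) := by rw [hcomm]
  have claimB : ∀ (c : R) (a a' : S),
      r (algebraMap R S c) (l a (r a' b)) = l a (r a' (r (algebraMap R S c) b)) := by
    intro c a a'
    calc r (algebraMap R S c) (l a (r a' b)) = l a (r (algebraMap R S c) (r a' b)) :=
          (hcomm a _ _).symm
      _ = l a (r (algebraMap R S c * a') b) := by rw [app_mul]
      _ = l a (r (a' * algebraMap R S c) b) := by rw [mul_comm]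
      _ = l a (r a' (r (algebraMap R S c) b)) := by rw [app_mul]
  set g : S →ₗ[R] S →ₗ[R] (B ⧸ N') :=
    LinearMap.mk₂ R (fun a a' => Submodule.Quotient.mk (l a (r a' b)))
      (fun a₁ a₂ a' => by
        rw [app_add, Submodule.Quotient.mk_add])
      (fun c a a' => by
        rw [Algebra.smul_def, app_mul, ← hsmul, Submodule.Quotient.mk_smul])
      (fun a a₁ a₂ => by
        rw [show (r (a₁ + a₂)) b = r a₁ b + r a₂ b from app_add r a₁ a₂ b, map_add,
          Submodule.Quotient.mk_add])
      (fun c a a' => by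
        rw [Algebra.smul_def, ← Submodule.Quotient.mk_smul, hsmul]
        rw [Submodule.Quotient.eq]
        have e1 : l a (r (algebraMap R S c * a') b)
            = r (algebraMap R S c) (l a (r a' b)) := by
          rw [app_mul, hcomm]
        have e2 : r (algebraMap R S c) (l a (r a' b))
              - l (algebraMap R S c) (l a (r a' b))
            = -(l a (r a' (l (algebraMap R S c) b - r (algebraMap R S c) b))) := by
          rw [map_sub (r a'), map_sub (l a), claimA, claimB]
          abel
        show l a (r (algebraMap R S c * a') b)
            - l (algebraMap R S c) (l a (r a' b)) ∈ N
        rw [e1, e2]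
        exact N.neg_mem (hNl _ _ (hNr _ _ (hN0 c))))
  have htmul : (s ⊗ₜ[R] (1 : S) : S ⊗[R] S) = (1 : S) ⊗ₜ[R] s := by
    apply hepi.injective
    simp [Algebra.TensorProduct.lmul'_apply_tmul]
  have := congrArg (TensorProduct.lift g) htmul
  rw [TensorProduct.lift.tmul, TensorProduct.lift.tmul] at this
  have e3 : g s 1 = Submodule.Quotient.mk (l s b) := by
    show Submodule.Quotient.mk (l s (r 1 b)) = _
    rw [map_one]; rfl
  have e4 : g 1 s = Submodule.Quotient.mk (r s b) := by
    show Submodule.Quotient.mk (l 1 (r s b)) = _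
    rw [map_one]; rfl
  rw [e3, e4, Submodule.Quotient.eq] at this
  exact this

end
/-- Let `R → S` be an epimorphism of commutative rings (i.e. the multiplication map
`S ⊗_R S → S` is an isomorphism) and `B` an `S`-`S`-bimodule.  Then the natural
ordinal-indexed filtrations of `B` as an `R`-`R`-bimodule and as an `S`-`S`-bimodule
coincide: `F_α B = F'_α B` for every ordinal `α`; in particular `B` is a quite
quasi-module over `S` if and only if it is a quite quasi-module over `R`. -/
theorem stmt18 (R S : Type) [CommRing R] [CommRing S] [Algebra R S]
    (hepi : Function.Bijective ⇑(Algebra.TensorProduct.lmul' R : S ⊗[R] S →ₐ[R] S))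
    (B : Type) [AddCommGroup B] (l r : S →+* AddMonoid.End B)
    (hcomm : ∀ (s t : S) (b : B), l s (r t b) = r t (l s b)) :
    (∀ α : Ordinal.{0},
      Bfilt (l.comp (algebraMap R S)) (r.comp (algebraMap R S)) α = Bfilt l r α) ∧
    ((∀ b : B, ∃ α : Ordinal.{0}, b ∈ Bfilt l r α) ↔
      (∀ b : B, ∃ α : Ordinal.{0},
        b ∈ Bfilt (l.comp (algebraMap R S)) (r.comp (algebraMap R S)) α)) := by
  set lR := l.comp (algebraMap R S) with hlR
  set rR := r.comp (algebraMap R S) with hrR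
  have main : ∀ α : Ordinal.{0}, Bfilt lR rR α = Bfilt l r α := by
    intro α
    induction α using Ordinal.induction with
    | h α IH =>
      apply Set.Subset.antisymm
      · -- hard direction: R-filtration ⊆ S-filtration
        intro b hb
        rw [mem_Bfilt]
        intro s
        set N : AddSubgroup B :=
          { carrier := {x | x = 0 ∨ ∃ β, β < α ∧ x ∈ Bfilt lR rR β}
            zero_mem' := Or.inl rfl
            add_mem' := by
              rintro x y (rfl | ⟨β, hβ, hx⟩) hy
              · simpa using hy
              · rcases hy with rfl | ⟨β', hβ', hy⟩
                · right; exact ⟨β, hβ, by simpa using hx⟩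
                · right
                  exact ⟨max β β', max_lt hβ hβ',
                    Bfilt_add_mem lR rR _ (Bfilt_mono lR rR (le_max_left _ _) hx)
                      (Bfilt_mono lR rR (le_max_right _ _) hy)⟩
            neg_mem' := by
              rintro x (rfl | ⟨β, hβ, hx⟩)
              · left; simp
              · right; exact ⟨β, hβ, Bfilt_neg_mem lR rR β hx⟩ } with hNdef
        have hTl : ∀ s : S, ∀ x ∈ N, l s x ∈ N := by
          rintro t x (rfl | ⟨β, hβ, hx⟩)
          · left; simp
          · right
            refine ⟨β, hβ, Bfilt_map_mem lR rR (l t : AddMonoid.End B) ?_ ?_ β hx⟩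
            · intro c x
              show l t (l (algebraMap R S c) x) = l (algebraMap R S c) (l t x)
              rw [← app_mul, mul_comm, app_mul]
            · intro c x
              exact hcomm t (algebraMap R S c) x
        have hTr : ∀ s : S, ∀ x ∈ N, r s x ∈ N := by
          rintro t x (rfl | ⟨β, hβ, hx⟩)
          · left; simp
          · right
            refine ⟨β, hβ, Bfilt_map_mem lR rR (r t : AddMonoid.End B) ?_ ?_ β hx⟩
            · intro c x
              exact (hcomm (algebraMap R S c) t x).symm
            · intro c x
              show r t (r (algebraMap R S c) x) = r (algebraMap R S c) (r t x)
              rw [← app_mul, mul_comm, app_mul]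
        have hN0 : ∀ c : R, l (algebraMap R S c) b - r (algebraMap R S c) b ∈ N := by
          intro c
          rw [mem_Bfilt] at hb
          rcases hb c with h0 | ⟨β, hβ, hm⟩
          · exact Or.inl h0
          · exact Or.inr ⟨β, hβ, hm⟩
        have := key_lemma l r hepi hcomm N b hN0 hTl hTr s
        rcases this with h0 | ⟨β, hβ, hm⟩
        · exact Or.inl h0
        · exact Or.inr ⟨β, hβ, (IH β hβ) ▸ hm⟩
      · -- easy direction
        intro b hb
        rw [mem_Bfilt] at hb ⊢
        intro c
        rcases hb (algebraMap R S c) with h0 | ⟨β, hβ, hm⟩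
        · exact Or.inl h0
        · exact Or.inr ⟨β, hβ, by rw [IH β hβ]; exact hm⟩
  refine ⟨main, ?_⟩
  constructor
  · intro h b
    obtain ⟨α, hα⟩ := h b
    exact ⟨α, by rw [main α]; exact hα⟩
  · intro h b
    obtain ⟨α, hα⟩ := h b
    exact ⟨α, by rw [← main α]; exact hα⟩
end
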